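/- arXiv:1812.01935 — 15 statements merged into one kernel-verified Lean document; each statement's English description precedes it below -/
import Mathlib

section
/- Suppose a_τ < 0. Then τ_m < τ_cp, the function ρ is strictly decreasing on the open interval (τ_m, τ_cp), strictly increasing on (−∞, τ_m), and strictly increasing on (τ_cp, +∞). -/
open scoped RealInnerProductSpace

/-- If `a_τ < 0`, then `τ_m < τ_cp`, `ρ` is strictly decreasing on
`(τ_m, τ_cp)`, strictly increasing on `(-∞, τ_m)` and strictly increasing on
`(τ_cp, +∞)`. -/
theorem stmt_0 {n : ℕ} (hn : 1 ≤ n)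
    (a g : EuclideanSpace ℝ (Fin n)) (ha : a ≠ 0)
    (B : Matrix (Fin n) (Fin n) ℝ) (hBs : B.IsSymm) (hBpd : B.PosDef)
    (ρ : ℝ → ℝ)
    (hρ : ∀ τ : ℝ, τ ≠ 1 / ‖a‖ ^ 2 →
      ρ τ = τ * ⟪a, g⟫ / (1 - τ * ‖a‖ ^ 2)
        + τ ^ 2 * ⟪a, Matrix.toEuclideanLin B a⟫ / (2 * (1 - τ * ‖a‖ ^ 2) ^ 2))
    (aτ τm τcp : ℝ)
    (haτ : aτ = ⟪a, Matrix.toEuclideanLin B a⟫ - ‖a‖ ^ 2 * ⟪a, g⟫)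
    (hτm : τm = 1 / ‖a‖ ^ 2)
    (hτcp : aτ ≠ 0 → τcp = -⟪a, g⟫ / aτ)
    (haτneg : aτ < 0) :
    τm < τcp ∧ StrictAntiOn ρ (Set.Ioo τm τcp) ∧ StrictMonoOn ρ (Set.Iio τm) ∧
      StrictMonoOn ρ (Set.Ioi τcp) := by
  set A := ‖a‖ ^ 2 with hA
  set G := (⟪a, g⟫ : ℝ) with hG
  set Q := (⟪a, Matrix.toEuclideanLin B a⟫ : ℝ) with hQdef
  have hApos : 0 < A := pow_pos (norm_pos_iff.mpr ha) 2
  have hQ : 0 < Q := by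
    have hx : (WithLp.equiv 2 (Fin n → ℝ)) a ≠ 0 := by simpa using ha
    have h := hBpd.dotProduct_mulVec_pos hx
    rw [hQdef, Matrix.toEuclideanLin_apply, EuclideanSpace.inner_eq_star_dotProduct]
    simpa [dotProduct_comm] using h
  have hτcp' : τcp = -G / aτ := hτcp (ne_of_lt haτneg)
  have haτ0 : aτ ≠ 0 := ne_of_lt haτneg
  have hGτ : τcp * aτ = -G := by
    rw [hτcp']; field_simp
  have hlt : τm < τcp := by
    rw [hτm, hτcp', neg_div, ← div_neg,
      div_lt_div_iff₀ hApos (by linarith : (0:ℝ) < -aτ)]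
    nlinarith
  set D : ℝ → ℝ := fun τ => (G + τ * aτ) / (1 - τ * A) ^ 3 with hD
  have hderiv : ∀ τ : ℝ, τ ≠ τm → HasDerivAt ρ (D τ) τ := by
    intro τ hτ
    have hτne : τ ≠ 1 / A := by rw [← hτm]; exact hτ
    have hden : 1 - τ * A ≠ 0 := by
      intro h
      exact hτne (by field_simp at h ⊢; linarith)
    have h1 : HasDerivAt (fun t : ℝ => 1 - t * A) (-A) τ := by
      simpa using ((hasDerivAt_id τ).mul_const A).const_sub 1
    have h2 : HasDerivAt (fun t : ℝ => t * G / (1 - t * A))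
        ((G * (1 - τ * A) - τ * G * (-A)) / (1 - τ * A) ^ 2) τ := by
      have := ((hasDerivAt_id τ).mul_const G).div h1 hden
      convert this using 1
      · rfl
      · rfl
      · funext t; rfl
      · simp
    have h3 : HasDerivAt (fun t : ℝ => t ^ 2 * Q / (2 * (1 - t * A) ^ 2))
        ((2 * τ * Q * (2 * (1 - τ * A) ^ 2) - τ ^ 2 * Q * (2 * (2 * (1 - τ * A) * -A)))
          / (2 * (1 - τ * A) ^ 2) ^ 2) τ := by
      have hd2 : HasDerivAt (fun t : ℝ => 2 * (1 - t * A) ^ 2)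
          (2 * (2 * (1 - τ * A) * -A)) τ := by
        simpa using ((h1.pow 2).const_mul (2:ℝ))
      have hnum : HasDerivAt (fun t : ℝ => t ^ 2 * Q) (2 * τ * Q) τ := by
        simpa [mul_comm] using (hasDerivAt_pow 2 τ).mul_const Q
      exact hnum.div hd2 (by positivity)
    have hf := h2.add h3
    have heq : ρ =ᶠ[nhds τ] fun t : ℝ => t * G / (1 - t * A)
        + t ^ 2 * Q / (2 * (1 - t * A) ^ 2) := by
      filter_upwards [isOpen_ne.mem_nhds hτne] with t ht
      exact hρ t ht
    have hmain := hf.congr_of_eventuallyEq heq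
    refine hmain.congr_deriv ?_
    rw [hD]
    simp only
    rw [haτ]
    field_simp
    ring
  have hnum_pos : ∀ x : ℝ, x < τcp → 0 < G + x * aτ := by
    intro x hx
    nlinarith [mul_lt_mul_of_neg_right hx haτneg]
  have hnum_neg : ∀ x : ℝ, τcp < x → G + x * aτ < 0 := by
    intro x hx
    nlinarith [mul_lt_mul_of_neg_right hx haτneg]
  have hden_pos : ∀ x : ℝ, x < τm → 0 < 1 - x * A := by
    intro x hx
    rw [hτm] at hx
    have := (lt_div_iff₀ hApos).mp hx
    linarith
  have hden_neg : ∀ x : ℝ, τm < x → 1 - x * A < 0 := by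
    intro x hx
    rw [hτm] at hx
    have := (div_lt_iff₀ hApos).mp hx
    linarith
  refine ⟨hlt, ?_, ?_, ?_⟩
  · apply strictAntiOn_of_deriv_neg (convex_Ioo _ _)
    · exact fun x hx => ((hderiv x (ne_of_gt hx.1)).continuousAt).continuousWithinAt
    · intro x hx
      rw [interior_Ioo] at hx
      rw [(hderiv x (ne_of_gt hx.1)).deriv]
      exact div_neg_of_pos_of_neg (hnum_pos x hx.2)
        (Odd.pow_neg (by decide) (hden_neg x hx.1))
  · apply strictMonoOn_of_deriv_pos (convex_Iio _)
    · exact fun x hx => ((hderiv x (ne_of_lt hx)).continuousAt).continuousWithinAt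
    · intro x hx
      rw [interior_Iio] at hx
      rw [(hderiv x (ne_of_lt hx)).deriv]
      exact div_pos (hnum_pos x (lt_trans hx hlt)) (pow_pos (hden_pos x hx) 3)
  · apply strictMonoOn_of_deriv_pos (convex_Ioi _)
    · exact fun x hx => ((hderiv x (ne_of_gt (lt_trans hlt hx))).continuousAt).continuousWithinAt
    · intro x hx
      rw [interior_Ioi] at hx
      rw [(hderiv x (ne_of_gt (lt_trans hlt hx))).deriv]
      exact div_pos_of_neg_of_neg (hnum_neg x hx)
        (Odd.pow_neg (by decide) (hden_neg x (lt_trans hlt hx)))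
end

section
/- Suppose a_τ = 0. Then aᵀg > 0, the function ρ is strictly increasing on the open interval (−∞, τ_m) and strictly decreasing on (τ_m, +∞). -/
open scoped RealInnerProductSpace

lemma rho_eq' (s c x : ℝ) (hux : 1 - x * s ≠ 0) (hs : s ≠ 0) :
    x * c / (1 - x * s) + x ^ 2 * (s * c) / (2 * (1 - x * s) ^ 2)
      = c * (1 - (1 - x * s) ^ 2) / (2 * s * (1 - x * s) ^ 2) := by
  field_simp
  ring

lemma key_ineq (s c x y : ℝ) (hs : 0 < s) (hc : 0 < c)
    (hux : 0 < 1 - x * s) (huy : 0 < 1 - y * s) (hxy : x < y) :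
    x * c / (1 - x * s) + x ^ 2 * (s * c) / (2 * (1 - x * s) ^ 2)
      < y * c / (1 - y * s) + y ^ 2 * (s * c) / (2 * (1 - y * s) ^ 2) := by
  rw [rho_eq' s c x hux.ne' hs.ne', rho_eq' s c y huy.ne' hs.ne',
    div_lt_div_iff₀ (by positivity) (by positivity)]
  have h1 : 1 - y * s < 1 - x * s := by nlinarith
  nlinarith [mul_pos hux huy, mul_pos (mul_pos hs hc) (mul_pos (sub_pos.2 h1) (add_pos hux huy))]

lemma key_ineq2 (s c x y : ℝ) (hs : 0 < s) (hc : 0 < c)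
    (hux : 1 - x * s < 0) (huy : 1 - y * s < 0) (hxy : x < y) :
    y * c / (1 - y * s) + y ^ 2 * (s * c) / (2 * (1 - y * s) ^ 2)
      < x * c / (1 - x * s) + x ^ 2 * (s * c) / (2 * (1 - x * s) ^ 2) := by
  rw [rho_eq' s c x hux.ne hs.ne', rho_eq' s c y huy.ne hs.ne',
    div_lt_div_iff₀ (by nlinarith [pow_pos (neg_pos.2 huy) 2, sq_abs (1 - y*s), abs_of_neg huy])
      (by nlinarith [pow_pos (neg_pos.2 hux) 2, sq_abs (1 - x*s), abs_of_neg hux])]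
  have h1 : 1 - y * s < 1 - x * s := by nlinarith
  nlinarith [mul_pos (mul_pos hs hc) (mul_pos (sub_pos.2 h1) (neg_pos.2 (add_neg hux huy)))]

theorem stmt_1 {{n : ℕ}} (hn : 1 ≤ n)
    (a g : EuclideanSpace ℝ (Fin n)) (ha : a ≠ 0)
    (B : Matrix (Fin n) (Fin n) ℝ) (hBs : B.IsSymm) (hBpd : B.PosDef)
    (ρ : ℝ → ℝ)
    (hρ : ∀ τ : ℝ, τ ≠ 1 / ‖a‖ ^ 2 →
      ρ τ = τ * ⟪a, g⟫ / (1 - τ * ‖a‖ ^ 2)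
        + τ ^ 2 * ⟪a, Matrix.toEuclideanLin B a⟫ / (2 * (1 - τ * ‖a‖ ^ 2) ^ 2))
    (aτ τm : ℝ)
    (haτ : aτ = ⟪a, Matrix.toEuclideanLin B a⟫ - ‖a‖ ^ 2 * ⟪a, g⟫)
    (hτm : τm = 1 / ‖a‖ ^ 2)
    (haτ0 : aτ = 0) :
    0 < ⟪a, g⟫ ∧ StrictMonoOn ρ (Set.Iio τm) ∧ StrictAntiOn ρ (Set.Ioi τm) := by
  set s : ℝ := ‖a‖ ^ 2 with hs_def
  have hs : 0 < s := pow_pos (norm_pos_iff.2 ha) 2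
  have hq : 0 < ⟪a, Matrix.toEuclideanLin B a⟫ := by
    have h := hBpd.re_dotProduct_pos (x := (WithLp.equiv 2 _ a)) (by simpa using ha)
    simpa [EuclideanSpace.inner_eq_star_dotProduct, dotProduct_comm (B.mulVec _)] using h
  have hqsc : ⟪a, Matrix.toEuclideanLin B a⟫ = s * ⟪a, g⟫ := by
    rw [haτ] at haτ0; linarith
  have hc : 0 < ⟪a, g⟫ := by
    rw [hqsc] at hq
    by_contra h
    push_neg at h
    nlinarith [mul_nonpos_of_nonneg_of_nonpos hs.le h]
  refine ⟨hc, ?_, ?_⟩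
  · intro x hx y hy hxy
    simp only [Set.mem_Iio, hτm] at hx hy
    rw [hρ x hx.ne, hρ y hy.ne, hqsc]
    exact key_ineq s _ x y hs hc (by rw [sub_pos]; exact (lt_div_iff₀ hs).mp hx)
      (by rw [sub_pos]; exact (lt_div_iff₀ hs).mp hy) hxy
  · intro x hx y hy hxy
    simp only [Set.mem_Ioi, hτm] at hx hy
    rw [hρ x hx.ne', hρ y hy.ne', hqsc]
    exact key_ineq2 s _ x y hs hc (by rw [sub_neg]; exact (div_lt_iff₀ hs).mp hx)
      (by rw [sub_neg]; exact (div_lt_iff₀ hs).mp hy) hxy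
end

section
/- Suppose a_τ > 0. Then τ_cp < τ_m, the function ρ is strictly increasing on the open interval (τ_cp, τ_m), strictly decreasing on (−∞, τ_cp), and strictly decreasing on (τ_m, +∞). -/
open scoped RealInnerProductSpace

lemma aux_hasDerivAt (c q s τ : ℝ) (h : 1 - τ * s ≠ 0) :
    HasDerivAt (fun t => t * c / (1 - t * s) + t ^ 2 * q / (2 * (1 - t * s) ^ 2))
      ((c + τ * (q - s * c)) / (1 - τ * s) ^ 3) τ := by
  have h1 : HasDerivAt (fun t : ℝ => 1 - t * s) (-s) τ := by
    simpa using ((hasDerivAt_id τ).mul_const s).const_sub 1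
  have h2 : HasDerivAt (fun t : ℝ => t * c) c τ := by
    simpa using (hasDerivAt_id τ).mul_const c
  have h3 : HasDerivAt (fun t : ℝ => t ^ 2 * q) (2 * τ * q) τ := by
    have := (hasDerivAt_pow 2 τ).mul_const q
    simpa [mul_comm, mul_assoc] using this
  have h4 : HasDerivAt (fun t : ℝ => 2 * (1 - t * s) ^ 2)
      (2 * ((2 : ℕ) * (1 - τ * s) ^ 1 * (-s))) τ := (h1.pow 2).const_mul 2
  have h4ne : 2 * (1 - τ * s) ^ 2 ≠ 0 := by
    have := pow_ne_zero 2 h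
    positivity
  have := (h2.div h1 h).add (h3.div h4 h4ne)
  refine this.congr_deriv ?_
  field_simp
  ring

theorem stmt_2 {{n : ℕ}} (hn : 1 ≤ n)
    (a g : EuclideanSpace ℝ (Fin n)) (ha : a ≠ 0)
    (B : Matrix (Fin n) (Fin n) ℝ) (hBs : B.IsSymm) (hBpd : B.PosDef)
    (ρ : ℝ → ℝ)
    (hρ : ∀ τ : ℝ, τ ≠ 1 / ‖a‖ ^ 2 →
      ρ τ = τ * ⟪a, g⟫ / (1 - τ * ‖a‖ ^ 2)
        + τ ^ 2 * ⟪a, Matrix.toEuclideanLin B a⟫ / (2 * (1 - τ * ‖a‖ ^ 2) ^ 2))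
    (aτ τm : ℝ)
    (haτ : aτ = ⟪a, Matrix.toEuclideanLin B a⟫ - ‖a‖ ^ 2 * ⟪a, g⟫)
    (hτm : τm = 1 / ‖a‖ ^ 2)
    (τcp : ℝ) (hτcp : aτ ≠ 0 → τcp = -⟪a, g⟫ / aτ)
    (haτpos : 0 < aτ) :
    τcp < τm ∧ StrictMonoOn ρ (Set.Ioo τcp τm) ∧ StrictAntiOn ρ (Set.Iio τcp) ∧
      StrictAntiOn ρ (Set.Ioi τm) := by
  set s : ℝ := ‖a‖ ^ 2 with hs
  set c : ℝ := ⟪a, g⟫ with hc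
  set q : ℝ := ⟪a, Matrix.toEuclideanLin B a⟫ with hq
  have hspos : 0 < s := by
    have : ‖a‖ ≠ 0 := norm_ne_zero_iff.mpr ha
    positivity
  have hqpos : 0 < q := by
    have h := hBpd.re_dotProduct_pos (x := (WithLp.equiv 2 _) a) (by simpa using ha)
    simpa [hq, Matrix.toEuclideanLin_apply, PiLp.inner_apply, dotProduct,
      mul_comm] using h
  have hτcp' : τcp = -c / aτ := hτcp (ne_of_gt haτpos)
  have haτq : aτ = q - s * c := haτ
  -- τcp < τm
  have hlt : τcp < τm := by
    rw [hτcp', hτm]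
    rw [div_lt_div_iff₀ haτpos hspos]
    nlinarith [hqpos]
  -- ρ agrees with f off τm
  set f : ℝ → ℝ := fun t => t * c / (1 - t * s) + t ^ 2 * q / (2 * (1 - t * s) ^ 2) with hf
  have hne : ∀ τ : ℝ, τ ≠ τm → 1 - τ * s ≠ 0 := by
    intro τ hτ h0
    apply hτ
    rw [hτm, eq_div_iff (ne_of_gt hspos)]
    linarith
  have hρf : ∀ τ : ℝ, τ ≠ τm → ρ τ = f τ := by
    intro τ hτ
    have := hρ τ (by rw [← hτm]; exact hτ)
    simpa [hf, ← hs, ← hc, ← hq] using this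
  -- derivative formula
  have hderiv : ∀ τ : ℝ, τ ≠ τm →
      HasDerivAt f ((c + τ * aτ) / (1 - τ * s) ^ 3) τ := by
    intro τ hτ
    rw [haτq]
    exact aux_hasDerivAt c q s τ (hne τ hτ)
  -- numerator and denominator sign facts
  have hnum : ∀ τ : ℝ, c + τ * aτ = aτ * (τ - τcp) := by
    intro τ
    rw [hτcp']
    field_simp
    ring
  have hden : ∀ τ : ℝ, 1 - τ * s = s * (τm - τ) := by
    intro τ
    rw [hτm]
    field_simp
  -- transfer lemmas
  have transferM : ∀ (S : Set ℝ), (∀ x ∈ S, x ≠ τm) → StrictMonoOn f S → StrictMonoOn ρ S := by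
    intro S hS hfm x hx y hy hxy
    rw [hρf x (hS x hx), hρf y (hS y hy)]
    exact hfm hx hy hxy
  have transferA : ∀ (S : Set ℝ), (∀ x ∈ S, x ≠ τm) → StrictAntiOn f S → StrictAntiOn ρ S := by
    intro S hS hfm x hx y hy hxy
    rw [hρf x (hS x hx), hρf y (hS y hy)]
    exact hfm hx hy hxy
  refine ⟨hlt, ?_, ?_, ?_⟩
  · -- StrictMonoOn on Ioo τcp τm
    refine transferM _ (fun x hx => ne_of_lt hx.2) ?_
    apply strictMonoOn_of_deriv_pos (convex_Ioo _ _)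
    · exact fun x hx => (hderiv x (ne_of_lt hx.2)).continuousAt.continuousWithinAt
    · intro x hx
      rw [interior_Ioo] at hx
      rw [(hderiv x (ne_of_lt hx.2)).deriv, hnum, hden]
      have h1 : 0 < aτ * (x - τcp) := mul_pos haτpos (by linarith [hx.1])
      have h2 : 0 < s * (τm - x) := mul_pos hspos (by linarith [hx.2])
      positivity
  · -- StrictAntiOn on Iio τcp
    refine transferA _ (fun x hx => ne_of_lt (lt_trans hx hlt)) ?_
    apply strictAntiOn_of_deriv_neg (convex_Iio _)
    · exact fun x hx => (hderiv x (ne_of_lt (lt_trans hx hlt))).continuousAt.continuousWithinAt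
    · intro x hx
      rw [interior_Iio, Set.mem_Iio] at hx
      have hxm : x < τm := lt_trans hx hlt
      rw [(hderiv x (ne_of_lt hxm)).deriv, hnum, hden]
      have h1 : aτ * (x - τcp) < 0 := mul_neg_of_pos_of_neg haτpos (by linarith)
      have h2 : 0 < s * (τm - x) := mul_pos hspos (by linarith)
      exact div_neg_of_neg_of_pos h1 (by positivity)
  · -- StrictAntiOn on Ioi τm
    refine transferA _ (fun x hx => ne_of_gt hx) ?_
    apply strictAntiOn_of_deriv_neg (convex_Ioi _)
    · exact fun x hx => (hderiv x (ne_of_gt hx)).continuousAt.continuousWithinAt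
    · intro x hx
      rw [interior_Ioi, Set.mem_Ioi] at hx
      rw [(hderiv x (ne_of_gt hx)).deriv, hnum, hden]
      have h1 : 0 < aτ * (x - τcp) := mul_pos haτpos (by linarith)
      have h2 : s * (τm - x) < 0 := mul_neg_of_pos_of_neg hspos (by linarith)
      apply div_neg_of_pos_of_neg h1
      have : (s * (τm - x)) ^ 3 = (s*(τm-x))*(s*(τm-x))*(s*(τm-x)) := by ring
      rw [this]
      exact mul_neg_of_pos_of_neg (mul_pos_of_neg_of_neg h2 h2) h2
end

section
/- Assume aᵀg ≠ 0 and Δ‖a‖ ≤ 1 − ε₀. Define τ* = −τ_Δ if a_τ ≤ 0; τ* = max{−τ_Δ, τ_cp} if a_τ > 0 and aᵀg > 0; τ* = min{τ_cp, τ_Δ} if a_τ > 0 and aᵀg < 0. Then τ* ∈ [−τ_Δ, τ_Δ] and ρ(τ*) ≤ ρ(τ) for every τ ∈ [−τ_Δ, τ_Δ]. -/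
open scoped RealInnerProductSpace

private lemma sq_aux_nonneg {x y : ℝ} (h1 : 0 ≤ x) (h2 : x ≤ y) : x ^ 2 ≤ y ^ 2 := by
  nlinarith

private lemma sq_aux_nonpos {x y : ℝ} (h1 : x ≤ y) (h2 : y ≤ 0) : y ^ 2 ≤ x ^ 2 := by
  nlinarith

set_option maxHeartbeats 1600000 in
theorem stmt_4 {{n : ℕ}} (hn : 1 ≤ n)
    (a g : EuclideanSpace ℝ (Fin n)) (ha : a ≠ 0)
    (B : Matrix (Fin n) (Fin n) ℝ) (hBs : B.IsSymm) (hBpd : B.PosDef)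
    (ρ : ℝ → ℝ)
    (hρ : ∀ τ : ℝ, τ ≠ 1 / ‖a‖ ^ 2 →
      ρ τ = τ * ⟪a, g⟫ / (1 - τ * ‖a‖ ^ 2)
        + τ ^ 2 * ⟪a, Matrix.toEuclideanLin B a⟫ / (2 * (1 - τ * ‖a‖ ^ 2) ^ 2))
    (aτ τm : ℝ)
    (haτ : aτ = ⟪a, Matrix.toEuclideanLin B a⟫ - ‖a‖ ^ 2 * ⟪a, g⟫)
    (hτm : τm = 1 / ‖a‖ ^ 2)
    (τcp : ℝ) (hτcp : aτ ≠ 0 → τcp = -⟪a, g⟫ / aτ)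
    (Δ ε₀ : ℝ) (hΔ : 0 < Δ) (hε₀ : 0 < ε₀) (hε₁ : ε₀ < 1)
    (τΔ τd τu : ℝ) (hτΔ : τΔ = Δ / ‖a‖) (hτd : τd = (1 - ε₀) / ‖a‖ ^ 2)
    (hτu : τu = (1 + ε₀) / ‖a‖ ^ 2)
    (hag : ⟪a, g⟫ ≠ 0) (hcase : Δ * ‖a‖ ≤ 1 - ε₀)
    (τstar : ℝ)
    (hτs1 : aτ ≤ 0 → τstar = -τΔ)
    (hτs2 : 0 < aτ → 0 < ⟪a, g⟫ → τstar = max (-τΔ) τcp)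
    (hτs3 : 0 < aτ → ⟪a, g⟫ < 0 → τstar = min τcp τΔ) :
    τstar ∈ Set.Icc (-τΔ) τΔ ∧ ∀ τ ∈ Set.Icc (-τΔ) τΔ, ρ τstar ≤ ρ τ := by
  set c := ⟪a, g⟫ with hcdef
  set b := ⟪a, Matrix.toEuclideanLin B a⟫ with hbdef
  have hb : 0 < b := by
    have h2 := hBpd.dotProduct_mulVec_pos (x := WithLp.equiv 2 (Fin n → ℝ) a) (by simpa using ha)
    rw [hbdef]
    simp only [Matrix.toEuclideanLin_apply]
    rw [EuclideanSpace.inner_eq_star_dotProduct]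
    simpa [dotProduct, mul_comm] using h2
  have hna : 0 < ‖a‖ := norm_pos_iff.mpr ha
  set s := ‖a‖ ^ 2 with hsdef
  have hs : 0 < s := by positivity
  clear_value c b s
  have hτΔpos : 0 < τΔ := by rw [hτΔ]; positivity
  have hτΔs : τΔ * s = Δ * ‖a‖ := by
    rw [hτΔ, hsdef]; field_simp
  have hdom : ∀ τ ∈ Set.Icc (-τΔ) τΔ, 0 < 1 - τ * s := by
    intro τ hτ
    have h1 : τ * s ≤ τΔ * s := mul_le_mul_of_nonneg_right hτ.2 hs.le
    rw [hτΔs] at h1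
    linarith
  have hρ' : ∀ τ : ℝ, 0 < 1 - τ * s →
      ρ τ = c * (τ / (1 - τ * s)) + b / 2 * (τ / (1 - τ * s)) ^ 2 := by
    intro τ hτ
    have hne : τ ≠ 1 / s := by
      intro h
      rw [h] at hτ
      field_simp at hτ
      linarith
    rw [hρ τ hne]
    field_simp
  have hmono : ∀ τ1 τ2 : ℝ, 0 < 1 - τ1 * s → 0 < 1 - τ2 * s → τ1 ≤ τ2 →
      τ1 / (1 - τ1 * s) ≤ τ2 / (1 - τ2 * s) := by
    intro τ1 τ2 h1 h2 h
    rw [div_le_div_iff₀ h1 h2]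
    nlinarith
  have hq : ∀ u1 u2 : ℝ, (b * u1 + c) ^ 2 ≤ (b * u2 + c) ^ 2 →
      c * u1 + b / 2 * u1 ^ 2 ≤ c * u2 + b / 2 * u2 ^ 2 := by
    intro u1 u2 h
    nlinarith [hb]
  -- lower bound on u: u > -(1/s)
  have hub : ∀ τ : ℝ, 0 < 1 - τ * s → -(1 / s) < τ / (1 - τ * s) := by
    intro τ hτ
    rw [lt_div_iff₀ hτ]
    have h1 : (1 / s) * s = 1 := by field_simp
    nlinarith [one_div_pos.mpr hs]
  rcases le_or_gt aτ 0 with hA | hA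
  · -- case aτ ≤ 0 : τstar = -τΔ, and b ≤ s*c so b*u+c > 0 on domain
    have hts := hτs1 hA
    have hbc : b ≤ s * c := by rw [haτ] at hA; linarith
    have hmem : τstar ∈ Set.Icc (-τΔ) τΔ := by
      rw [hts]; constructor <;> linarith
    refine ⟨hmem, fun τ hτ => ?_⟩
    have hd1 := hdom τstar hmem
    have hd2 := hdom τ hτ
    rw [hρ' τstar hd1, hρ' τ hd2]
    apply hq
    have hpos : ∀ σ : ℝ, 0 < 1 - σ * s → 0 < b * (σ / (1 - σ * s)) + c := by
      intro σ hσ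
      have h1 := hub σ hσ
      have h2 : b * (-(1/s)) < b * (σ / (1 - σ * s)) := by
        exact mul_lt_mul_of_pos_left h1 hb
      have h3 : b * (1/s) * s = b := by field_simp
      have h4 : (0:ℝ) < 1/s := one_div_pos.mpr hs
      nlinarith
    have hle : τstar / (1 - τstar * s) ≤ τ / (1 - τ * s) := by
      apply hmono _ _ hd1 hd2
      rw [hts]; exact hτ.1
    have h1 := hpos τstar hd1
    have m2 : b * (τstar / (1 - τstar * s)) + c ≤ b * (τ / (1 - τ * s)) + c := by
      have := mul_le_mul_of_nonneg_left hle hb.le; linarith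
    exact sq_aux_nonneg h1.le m2
  · -- case aτ > 0
    have hτcp' := hτcp (ne_of_gt hA)
    have hbcs : b = aτ + s * c := by rw [haτ]; ring
    have h1cp : 1 - τcp * s = b / aτ := by
      rw [hτcp', hbcs]; field_simp; ring
    have hdcp : 0 < 1 - τcp * s := by rw [h1cp]; positivity
    have hucp : τcp / (1 - τcp * s) = -c / b := by
      rw [h1cp, hτcp']
      field_simp
    have hzero : b * (τcp / (1 - τcp * s)) + c = 0 := by
      rw [hucp]; field_simp; ring
    rcases lt_or_gt_of_ne hag with hc | hc
    · -- c < 0 : τcp > 0, τstar = min τcp τΔ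
      have hts := hτs3 hA hc
      have hcppos : 0 < τcp := by
        rw [hτcp']; exact div_pos (by linarith) hA
      have hmem : τstar ∈ Set.Icc (-τΔ) τΔ := by
        rw [hts]
        constructor
        · have := lt_min hcppos hτΔpos; linarith
        · exact min_le_right _ _
      refine ⟨hmem, fun τ hτ => ?_⟩
      have hd1 := hdom τstar hmem
      have hd2 := hdom τ hτ
      rw [hρ' τstar hd1, hρ' τ hd2]
      apply hq
      rcases le_or_gt τcp τΔ with h | h
      · have : τstar = τcp := by rw [hts, min_eq_left h]
        rw [this, hzero]
        simpa using sq_nonneg (b * (τ / (1 - τ * s)) + c)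
      · have hts2 : τstar = τΔ := by rw [hts, min_eq_right h.le]
        have hle1 : τ / (1 - τ * s) ≤ τstar / (1 - τstar * s) := by
          apply hmono _ _ hd2 hd1
          rw [hts2]; exact hτ.2
        have hle2 : τstar / (1 - τstar * s) ≤ τcp / (1 - τcp * s) := by
          apply hmono _ _ hd1 hdcp
          rw [hts2]; exact h.le
        have m1 : b * (τ / (1 - τ * s)) + c ≤ b * (τstar / (1 - τstar * s)) + c := by
          have := mul_le_mul_of_nonneg_left hle1 hb.le; linarith
        have m2 : b * (τstar / (1 - τstar * s)) + c ≤ 0 := by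
          have := mul_le_mul_of_nonneg_left hle2 hb.le; linarith [hzero]
        exact sq_aux_nonpos m1 m2
    · -- c > 0 : τcp < 0, τstar = max (-τΔ) τcp
      have hts := hτs2 hA hc
      have hcpneg : τcp < 0 := by
        rw [hτcp']
        apply div_neg_of_neg_of_pos (by linarith) hA
      have hmem : τstar ∈ Set.Icc (-τΔ) τΔ := by
        rw [hts]
        constructor
        · exact le_max_left _ _
        · apply max_le (by linarith) (by linarith)
      refine ⟨hmem, fun τ hτ => ?_⟩
      have hd1 := hdom τstar hmem
      have hd2 := hdom τ hτ
      rw [hρ' τstar hd1, hρ' τ hd2]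
      apply hq
      rcases le_or_gt (-τΔ) τcp with h | h
      · have : τstar = τcp := by rw [hts, max_eq_right h]
        rw [this, hzero]
        simpa using sq_nonneg (b * (τ / (1 - τ * s)) + c)
      · have hts2 : τstar = -τΔ := by rw [hts, max_eq_left h.le]
        have hle1 : τcp / (1 - τcp * s) ≤ τstar / (1 - τstar * s) := by
          apply hmono _ _ hdcp hd1
          rw [hts2]; exact h.le
        have hle2 : τstar / (1 - τstar * s) ≤ τ / (1 - τ * s) := by
          apply hmono _ _ hd1 hd2
          rw [hts2]; exact hτ.1
        have m1 : 0 ≤ b * (τstar / (1 - τstar * s)) + c := by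
          have := mul_le_mul_of_nonneg_left hle1 hb.le; linarith [hzero]
        have m2 : b * (τstar / (1 - τstar * s)) + c ≤ b * (τ / (1 - τ * s)) + c := by
          have := mul_le_mul_of_nonneg_left hle2 hb.le; linarith
        exact sq_aux_nonneg m1 m2
end

section
/- Assume aᵀg ≠ 0 and |1 − Δ‖a‖| < ε₀. Define τ* = −τ_Δ if a_τ ≤ 0; τ* = max{−τ_Δ, τ_cp} if a_τ > 0 and aᵀg > 0; τ* = min{τ_cp, τ_d} if a_τ > 0 and aᵀg < 0. Then τ* ∈ [−τ_Δ, τ_d] and ρ(τ*) ≤ ρ(τ) for every τ ∈ [−τ_Δ, τ_d]. -/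
open scoped RealInnerProductSpace

set_option maxHeartbeats 1000000 in
theorem stmt_5 {{n : ℕ}} (hn : 1 ≤ n)
    (a g : EuclideanSpace ℝ (Fin n)) (ha : a ≠ 0)
    (B : Matrix (Fin n) (Fin n) ℝ) (hBs : B.IsSymm) (hBpd : B.PosDef)
    (ρ : ℝ → ℝ)
    (hρ : ∀ τ : ℝ, τ ≠ 1 / ‖a‖ ^ 2 →
      ρ τ = τ * ⟪a, g⟫ / (1 - τ * ‖a‖ ^ 2)
        + τ ^ 2 * ⟪a, Matrix.toEuclideanLin B a⟫ / (2 * (1 - τ * ‖a‖ ^ 2) ^ 2))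
    (aτ τm : ℝ)
    (haτ : aτ = ⟪a, Matrix.toEuclideanLin B a⟫ - ‖a‖ ^ 2 * ⟪a, g⟫)
    (hτm : τm = 1 / ‖a‖ ^ 2)
    (τcp : ℝ) (hτcp : aτ ≠ 0 → τcp = -⟪a, g⟫ / aτ)
    (Δ ε₀ : ℝ) (hΔ : 0 < Δ) (hε₀ : 0 < ε₀) (hε₁ : ε₀ < 1)
    (τΔ τd τu : ℝ) (hτΔ : τΔ = Δ / ‖a‖) (hτd : τd = (1 - ε₀) / ‖a‖ ^ 2)
    (hτu : τu = (1 + ε₀) / ‖a‖ ^ 2)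
    (hag : ⟪a, g⟫ ≠ 0) (hcase : |1 - Δ * ‖a‖| < ε₀)
    (τstar : ℝ)
    (hτs1 : aτ ≤ 0 → τstar = -τΔ)
    (hτs2 : 0 < aτ → 0 < ⟪a, g⟫ → τstar = max (-τΔ) τcp)
    (hτs3 : 0 < aτ → ⟪a, g⟫ < 0 → τstar = min τcp τd) :
    τstar ∈ Set.Icc (-τΔ) τd ∧ ∀ τ ∈ Set.Icc (-τΔ) τd, ρ τstar ≤ ρ τ := by
  have hna : 0 < ‖a‖ := norm_pos_iff.mpr ha
  set p : ℝ := ⟪a, g⟫ with hp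
  set b : ℝ := ⟪a, Matrix.toEuclideanLin B a⟫ with hbdef
  set s : ℝ := ‖a‖ ^ 2 with hsdef
  have hs : 0 < s := by positivity
  have hb : 0 < b := by
    have h := hBpd.dotProduct_mulVec_pos (x := WithLp.ofLp a) (by simpa using ha)
    simpa [hbdef, Matrix.toEuclideanLin_apply, EuclideanSpace.inner_eq_star_dotProduct,
      dotProduct, mul_comm] using h
  have hbsp : b = aτ + s * p := by rw [haτ]; ring
  have hτΔpos : 0 < τΔ := by rw [hτΔ]; positivity
  have hτdpos : 0 < τd := by
    rw [hτd]
    have h1 : 0 < 1 - ε₀ := by linarith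
    positivity
  have hτmpos : 0 < τm := by rw [hτm]; positivity
  have hτdm : τd < τm := by
    rw [hτd, hτm, div_lt_div_iff₀ hs hs]
    nlinarith
  set u : ℝ → ℝ := fun τ => τ / (1 - τ * s) with hu
  have hdpos : ∀ τ : ℝ, τ < τm → 0 < 1 - τ * s := by
    intro τ hτ
    rw [hτm, lt_div_iff₀ hs] at hτ
    linarith
  have key : ∀ τ : ℝ, τ < τm → ρ τ = b / 2 * (u τ + p / b) ^ 2 - p ^ 2 / (2 * b) := by
    intro τ hτ
    have hd := hdpos τ hτ
    have hne : τ ≠ 1 / ‖a‖ ^ 2 := by rw [← hsdef, ← hτm]; exact ne_of_lt hτ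
    rw [hρ τ hne]
    show τ * p / (1 - τ * s) + τ ^ 2 * b / (2 * (1 - τ * s) ^ 2)
        = b / 2 * (τ / (1 - τ * s) + p / b) ^ 2 - p ^ 2 / (2 * b)
    field_simp
    ring
  have humono : ∀ τ₁ τ₂ : ℝ, τ₁ ≤ τ₂ → τ₂ < τm → u τ₁ ≤ u τ₂ := by
    intro τ₁ τ₂ h12 h2
    have hd2 := hdpos τ₂ h2
    have hd1 := hdpos τ₁ (lt_of_le_of_lt h12 h2)
    show τ₁ / (1 - τ₁ * s) ≤ τ₂ / (1 - τ₂ * s)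
    rw [div_le_div_iff₀ hd1 hd2]
    nlinarith
  have hulb : ∀ τ : ℝ, τ < τm → -(1 / s) < u τ := by
    intro τ hτ
    have hd := hdpos τ hτ
    have h1 : u τ + 1 / s = 1 / (s * (1 - τ * s)) := by
      show τ / (1 - τ * s) + 1 / s = 1 / (s * (1 - τ * s))
      field_simp
      ring
    have h2 : 0 < 1 / (s * (1 - τ * s)) := by positivity
    linarith
  have hmem_lt : ∀ τ ∈ Set.Icc (-τΔ) τd, τ < τm := fun τ hτ => lt_of_le_of_lt hτ.2 hτdm
  have hnτΔd : -τΔ ≤ τd := by linarith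
  -- reduction of the inequality to the square comparison
  have hred : ∀ τ ∈ Set.Icc (-τΔ) τd, τstar < τm →
      (u τstar + p / b) ^ 2 ≤ (u τ + p / b) ^ 2 → ρ τstar ≤ ρ τ := by
    intro τ hτ hsm hsq
    rw [key τ (hmem_lt τ hτ), key τstar hsm]
    have : b / 2 * (u τstar + p / b) ^ 2 ≤ b / 2 * (u τ + p / b) ^ 2 := by
      apply mul_le_mul_of_nonneg_left hsq
      linarith
    linarith
  rcases le_or_gt aτ 0 with hA | hA
  · -- case aτ ≤ 0 : τstar = -τΔ, p > 0
    have hts := hτs1 hA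
    have hpp : 0 < p := by nlinarith
    have hsm : τstar < τm := by rw [hts]; linarith
    refine ⟨by rw [hts]; exact ⟨le_rfl, hnτΔd⟩, ?_⟩
    intro τ hτ
    apply hred τ hτ hsm
    have h1 : u τstar ≤ u τ := by
      rw [hts]; exact humono _ _ hτ.1 (hmem_lt τ hτ)
    have h2 : -(1 / s) < u τstar := by rw [hts]; exact hulb _ (by linarith)
    have h3 : -(p / b) ≤ -(1 / s) := by
      rw [neg_le_neg_iff, div_le_div_iff₀ hs hb]
      nlinarith
    nlinarith
  · -- case aτ > 0
    have haτ0 : aτ ≠ 0 := ne_of_gt hA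
    have hτcp' := hτcp haτ0
    have hdcp : 1 - τcp * s = b / aτ := by
      rw [hτcp']
      field_simp
      linarith [hbsp]
    have hucp : u τcp = -p / b := by
      show τcp / (1 - τcp * s) = -p / b
      rw [hdcp, hτcp']
      field_simp
    rcases lt_trichotomy p 0 with hpn | hp0 | hpp
    · -- p < 0 : τstar = min τcp τd
      have hts := hτs3 hA hpn
      have hcppos : 0 < τcp := by
        rw [hτcp']
        apply div_pos (by linarith) hA
      have hsm : τstar < τm := by
        rw [hts]
        exact lt_of_le_of_lt (min_le_right _ _) hτdm
      refine ⟨by rw [hts]; exact ⟨le_min (by linarith) hnτΔd, min_le_right _ _⟩, ?_⟩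
      intro τ hτ
      apply hred τ hτ hsm
      rcases le_or_gt τcp τd with hcase2 | hcase2
      · have h1 : τstar = τcp := by rw [hts, min_eq_left hcase2]
        rw [h1, hucp]
        have hz : -p / b + p / b = 0 := by ring
        rw [hz]
        simpa using sq_nonneg (u τ + p / b)
      · have h1 : τstar = τd := by rw [hts, min_eq_right hcase2.le]
        have hdd := hdpos τd hτdm
        have hτdcp : τd * aτ ≤ -p := by
          rw [hτcp', lt_div_iff₀ hA] at hcase2
          linarith
        have hbτd : τd * b = τd * aτ + τd * (s * p) := by rw [hbsp]; ring
        have h2 : u τstar ≤ -p / b := by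
          rw [h1]
          show τd / (1 - τd * s) ≤ -p / b
          rw [div_le_div_iff₀ hdd hb]
          nlinarith [hbτd, hτdcp]
        rw [neg_div] at h2
        have h3 : u τ ≤ u τstar := by
          rw [h1]; exact humono _ _ hτ.2 hτdm
        nlinarith [mul_self_le_mul_self (by linarith : (0:ℝ) ≤ -(u τstar + p / b))
          (by linarith : -(u τstar + p / b) ≤ -(u τ + p / b))]
    · exact absurd hp0 hag
    · -- p > 0 : τstar = max (-τΔ) τcp
      have hts := hτs2 hA hpp
      have hcpneg : τcp < 0 := by
        rw [hτcp']
        apply div_neg_of_neg_of_pos (by linarith) hA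
      have hsm : τstar < τm := by
        rw [hts, max_lt_iff]
        constructor <;> linarith
      refine ⟨by rw [hts]; exact ⟨le_max_left _ _, max_le hnτΔd (by linarith)⟩, ?_⟩
      intro τ hτ
      apply hred τ hτ hsm
      rcases le_or_gt (-τΔ) τcp with hcase2 | hcase2
      · have h1 : τstar = τcp := by rw [hts, max_eq_right hcase2]
        rw [h1, hucp]
        have hz : -p / b + p / b = 0 := by ring
        rw [hz]
        simpa using sq_nonneg (u τ + p / b)
      · have h1 : τstar = -τΔ := by rw [hts, max_eq_left hcase2.le]
        have h2 : u τcp ≤ u τstar := by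
          rw [h1]; exact humono _ _ hcase2.le (by linarith)
        rw [hucp, neg_div] at h2
        have h3 : u τstar ≤ u τ := by
          rw [h1]; exact humono _ _ hτ.1 (hmem_lt τ hτ)
        nlinarith [mul_self_le_mul_self (by linarith : (0:ℝ) ≤ u τstar + p / b)
          (by linarith : u τstar + p / b ≤ u τ + p / b)]
end

section
/- Assume Δ‖a‖ ≥ 1 + ε₀ and a_τ < 0. Then aᵀg > 0 and τ_m < τ_cp, and on the set Ω = [−τ_Δ, τ_d] ∪ [τ_u, τ_Δ] the function ρ is minimized at τ*, where τ* = τ_u if τ_m < τ_cp ≤ τ_u; τ* = τ_cp if τ_u < τ_cp < τ_Δ; and τ* is whichever of −τ_Δ and τ_Δ gives the smaller value of ρ if τ_cp ≥ τ_Δ. That is, τ* ∈ Ω and ρ(τ*) ≤ ρ(τ) for every τ ∈ Ω. -/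
set_option maxHeartbeats 1000000

open scoped RealInnerProductSpace

private lemma u_mono' (s t1 t2 : ℝ) (h12 : t1 ≤ t2)
    (hpos : 0 < (1 - t1*s) * (1 - t2*s)) :
    t1/(1 - t1*s) ≤ t2/(1 - t2*s) := by
  have hne := mul_ne_zero_iff.mp hpos.ne'
  have key : t2/(1-t2*s) - t1/(1-t1*s) = (t2 - t1)/((1-t1*s)*(1-t2*s)) := by
    rw [div_sub_div _ _ hne.2 hne.1,
      show t2*(1-t1*s) - (1-t2*s)*t1 = t2 - t1 from by ring, mul_comm]
  have h2 : 0 ≤ (t2-t1)/((1-t1*s)*(1-t2*s)) := div_nonneg (by linarith) hpos.le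
  linarith

private lemma u_lb' (s t : ℝ) (hs : 0 < s) (ht : t*s < 1) : -(1/s) ≤ t/(1-t*s) := by
  have hd : 0 < 1 - t*s := by linarith
  rw [le_div_iff₀ hd]
  have h1 : (1/s)*s = 1 := one_div_mul_cancel hs.ne'
  nlinarith [one_div_pos.mpr hs]

private lemma u_ub' (s t : ℝ) (hs : 0 < s) (ht : 1 < t*s) : t/(1-t*s) ≤ -(1/s) := by
  have hd : 1 - t*s < 0 := by linarith
  rw [div_le_iff_of_neg hd]
  have h1 : (1/s)*s = 1 := one_div_mul_cancel hs.ne'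
  nlinarith [one_div_pos.mpr hs]

private lemma phi_inc' (p q x y : ℝ) (hq : 0 < q) (hx : -p ≤ q*x) (hxy : x ≤ y) :
    p*x + q*x^2/2 ≤ p*y + q*y^2/2 := by
  nlinarith [mul_nonneg (sub_nonneg.2 hxy) hq.le, mul_le_mul_of_nonneg_left hxy hq.le]

private lemma phi_dec' (p q x y : ℝ) (hq : 0 < q) (hy : q*y ≤ -p) (hxy : x ≤ y) :
    p*y + q*y^2/2 ≤ p*x + q*x^2/2 := by
  nlinarith [mul_nonneg (sub_nonneg.2 hxy) hq.le, mul_le_mul_of_nonneg_left hxy hq.le]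

private lemma phi_glob' (p q v : ℝ) (hq : 0 < q) :
    p*(-(p/q)) + q*(-(p/q))^2/2 ≤ p*v + q*v^2/2 := by
  have h : p*v + q*v^2/2 - (p*(-(p/q)) + q*(-(p/q))^2/2) = (q*v+p)^2/(2*q) := by
    field_simp
    ring
  nlinarith [div_nonneg (sq_nonneg (q*v+p)) (by linarith : (0:ℝ) ≤ 2*q)]

theorem stmt_6 {{n : ℕ}} (hn : 1 ≤ n)
    (a g : EuclideanSpace ℝ (Fin n)) (ha : a ≠ 0)
    (B : Matrix (Fin n) (Fin n) ℝ) (hBs : B.IsSymm) (hBpd : B.PosDef)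
    (ρ : ℝ → ℝ)
    (hρ : ∀ τ : ℝ, τ ≠ 1 / ‖a‖ ^ 2 →
      ρ τ = τ * ⟪a, g⟫ / (1 - τ * ‖a‖ ^ 2)
        + τ ^ 2 * ⟪a, Matrix.toEuclideanLin B a⟫ / (2 * (1 - τ * ‖a‖ ^ 2) ^ 2))
    (aτ τm : ℝ)
    (haτ : aτ = ⟪a, Matrix.toEuclideanLin B a⟫ - ‖a‖ ^ 2 * ⟪a, g⟫)
    (hτm : τm = 1 / ‖a‖ ^ 2)
    (τcp : ℝ) (hτcp : aτ ≠ 0 → τcp = -⟪a, g⟫ / aτ)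
    (Δ ε₀ : ℝ) (hΔ : 0 < Δ) (hε₀ : 0 < ε₀) (hε₁ : ε₀ < 1)
    (τΔ τd τu : ℝ) (hτΔ : τΔ = Δ / ‖a‖) (hτd : τd = (1 - ε₀) / ‖a‖ ^ 2)
    (hτu : τu = (1 + ε₀) / ‖a‖ ^ 2)
    (hcase : 1 + ε₀ ≤ Δ * ‖a‖) (haτneg : aτ < 0)
    (τstar : ℝ)
    (hτs1 : τm < τcp → τcp ≤ τu → τstar = τu)
    (hτs2 : τu < τcp → τcp < τΔ → τstar = τcp)
    (hτs3 : τΔ ≤ τcp → (τstar = -τΔ ∨ τstar = τΔ) ∧ ρ τstar = min (ρ (-τΔ)) (ρ τΔ)) :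
    0 < ⟪a, g⟫ ∧ τm < τcp ∧
      τstar ∈ Set.Icc (-τΔ) τd ∪ Set.Icc τu τΔ ∧
      ∀ τ ∈ Set.Icc (-τΔ) τd ∪ Set.Icc τu τΔ, ρ τstar ≤ ρ τ := by
  have hna : 0 < ‖a‖ := norm_pos_iff.mpr ha
  set s : ℝ := ‖a‖ ^ 2 with hsdef
  set p : ℝ := ⟪a, g⟫ with hpdef
  set q : ℝ := ⟪a, Matrix.toEuclideanLin B a⟫ with hqdef
  have hs : 0 < s := by positivity
  have hq : 0 < q := by
    have h := hBpd.dotProduct_mulVec_pos (x := fun i => a i) (by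
      intro h; apply ha; ext i; exact congrFun h i)
    simpa [hqdef, PiLp.inner_apply, Matrix.toEuclideanLin_apply, dotProduct,
      WithLp.equiv, mul_comm] using h
  have hpq : q < s * p := by rw [haτ] at haτneg; linarith
  have hp : 0 < p := by nlinarith
  have hd0 : 0 < s * p - q := by linarith
  have hτcp' : τcp = p / (s * p - q) := by
    rw [hτcp haτneg.ne, haτ]
    rw [div_eq_div_iff (by rw [haτ] at haτneg; linarith) (by linarith)]
    ring
  have hτmcp : 1 / s < τcp := by
    rw [hτcp', div_lt_div_iff₀ hs hd0]
    nlinarith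
  -- the substitution u τ = τ / (1 - τ s)
  set u : ℝ → ℝ := fun τ => τ / (1 - τ * s) with hu
  have hρu : ∀ τ : ℝ, τ ≠ 1 / s → ρ τ = p * u τ + q * (u τ)^2 / 2 := by
    intro τ hτ
    have hdne : 1 - τ * s ≠ 0 := by
      intro h
      apply hτ
      field_simp
      linarith
    rw [hρ τ hτ, hu]
    field_simp
  -- basic orderings
  have hτune : 1 < τu * s := by
    rw [hτu]; rw [div_mul_cancel₀ _ hs.ne']; linarith
  have hτdlt : τd * s < 1 := by
    rw [hτd]; rw [div_mul_cancel₀ _ hs.ne']; linarith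
  have hτΔpos : 0 < τΔ := by rw [hτΔ]; positivity
  have hτuΔ : τu ≤ τΔ := by
    rw [hτu, hτΔ, div_le_div_iff₀ hs hna]
    nlinarith
  have hτdpos : 0 < τd := by rw [hτd]; exact div_pos (by linarith) hs
  have hτcpgt : 1 < τcp * s := by
    have := hτmcp
    rw [div_lt_iff₀ hs] at this; linarith
  have hτΔgt : 1 < τΔ * s :=
    lt_of_lt_of_le hτune (mul_le_mul_of_nonneg_right hτuΔ hs.le)
  -- u at τcp is the global minimizer -(p/q)
  have hucp : u τcp = -(p/q) := by
    have hdne : 1 - τcp * s ≠ 0 := by nlinarith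
    show τcp / (1 - τcp * s) = -(p/q)
    rw [← neg_div, div_eq_div_iff hdne hq.ne', hτcp']
    have hd0' : s * p - q ≠ 0 := hd0.ne'
    linear_combination (-p) * inv_mul_cancel₀ hd0'
  -- membership of key points ≠ 1/s
  have hne_of_lt : ∀ t : ℝ, t * s < 1 → t ≠ 1 / s := by
    intro t h he; rw [he, div_mul_cancel₀ _ hs.ne'] at h; linarith
  have hne_of_gt : ∀ t : ℝ, 1 < t * s → t ≠ 1 / s := by
    intro t h he; rw [he, div_mul_cancel₀ _ hs.ne'] at h; linarith
  have hneg : -τΔ * s < 1 := by nlinarith [mul_pos hτΔpos hs]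
  refine ⟨hp, by rw [hτm]; exact hτmcp, ?_, ?_⟩
  · -- membership of τstar
    rcases le_or_gt τcp τu with hc1 | hc1
    · rw [hτs1 (by rw [hτm]; exact hτmcp) hc1]
      exact Or.inr ⟨le_refl _, hτuΔ⟩
    · rcases lt_or_ge τcp τΔ with hc2 | hc2
      · rw [hτs2 hc1 hc2]
        exact Or.inr ⟨hc1.le, hc2.le⟩
      · rcases (hτs3 hc2).1 with h | h <;> rw [h]
        · exact Or.inl ⟨le_refl _, by nlinarith⟩
        · exact Or.inr ⟨hτuΔ, le_refl _⟩
  · -- minimality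
    intro τ hτ
    -- facts about τ
    have hτsign : τ * s < 1 ∨ 1 < τ * s := by
      rcases hτ with ⟨_, h2⟩ | ⟨h1, _⟩
      · exact Or.inl (by nlinarith [mul_le_mul_of_nonneg_right h2 hs.le])
      · exact Or.inr (by nlinarith [mul_le_mul_of_nonneg_right h1 hs.le])
    have hτne : τ ≠ 1 / s := by
      rcases hτsign with h | h
      · exact hne_of_lt τ h
      · exact hne_of_gt τ h
    rcases le_or_gt τcp τu with hc1 | hc1
    · -- case 1 : τstar = τu
      rw [hτs1 (by rw [hτm]; exact hτmcp) hc1]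
      rw [hρu τu (hne_of_gt _ hτune), hρu τ hτne]
      -- u τcp ≤ u τu so -p ≤ q * u τu
      have h1 : u τcp ≤ u τu := u_mono' s τcp τu hc1
        (mul_pos_of_neg_of_neg (by linarith) (by linarith))
      have hx : -p ≤ q * u τu := by
        rw [hucp] at h1
        have := mul_le_mul_of_nonneg_left h1 hq.le
        rw [mul_neg, mul_div_cancel₀ _ hq.ne'] at this
        linarith
      have hxy : u τu ≤ u τ := by
        rcases hτ with ⟨h1', h2⟩ | ⟨h1', h2⟩
        · have hlt : τ * s < 1 := by nlinarith [mul_le_mul_of_nonneg_right h2 hs.le]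
          calc u τu ≤ -(1/s) := u_ub' s τu hs hτune
            _ ≤ u τ := u_lb' s τ hs hlt
        · have hgt : 1 < τ * s := by nlinarith [mul_le_mul_of_nonneg_right h1' hs.le]
          exact u_mono' s τu τ h1'
            (mul_pos_of_neg_of_neg (by linarith) (by linarith))
      exact phi_inc' p q (u τu) (u τ) hq hx hxy
    · rcases lt_or_ge τcp τΔ with hc2 | hc2
      · -- case 2 : τstar = τcp, global min
        rw [hτs2 hc1 hc2]
        rw [hρu τcp (hne_of_gt _ hτcpgt), hρu τ hτne, hucp]
        exact phi_glob' p q (u τ) hq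
      · -- case 3
        have hmin := (hτs3 hc2).2
        rcases hτ with ⟨h1', h2⟩ | ⟨h1', h2⟩
        · have : ρ (-τΔ) ≤ ρ τ := by
            rw [hρu (-τΔ) (hne_of_lt _ hneg), hρu τ hτne]
            have hx : -p ≤ q * u (-τΔ) := by
              have h1 : -(1/s) ≤ u (-τΔ) := u_lb' s (-τΔ) hs hneg
              have h2' : -(p/q) ≤ -(1/s) := by
                rw [neg_le_neg_iff, div_le_div_iff₀ hs hq]
                nlinarith
              have := mul_le_mul_of_nonneg_left (le_trans h2' h1) hq.le
              rw [mul_neg, mul_div_cancel₀ _ hq.ne'] at this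
              linarith
            have hlt : τ * s < 1 := by nlinarith [mul_le_mul_of_nonneg_right h2 hs.le]
            exact phi_inc' p q (u (-τΔ)) (u τ) hq hx
              (u_mono' s (-τΔ) τ h1'
                (mul_pos (by linarith) (by linarith)))
          calc ρ τstar ≤ ρ (-τΔ) := by rw [hmin]; exact min_le_left _ _
            _ ≤ ρ τ := this
        · have : ρ τΔ ≤ ρ τ := by
            rw [hρu τΔ (hne_of_gt _ hτΔgt), hρu τ hτne]
            have hy : q * u τΔ ≤ -p := by
              have h1 : u τΔ ≤ u τcp := u_mono' s τΔ τcp hc2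
                (mul_pos_of_neg_of_neg (by linarith) (by linarith))
              rw [hucp] at h1
              have := mul_le_mul_of_nonneg_left h1 hq.le
              rw [mul_neg, mul_div_cancel₀ _ hq.ne'] at this
              linarith
            have hgt : 1 < τ * s := by nlinarith [mul_le_mul_of_nonneg_right h1' hs.le]
            exact phi_dec' p q (u τ) (u τΔ) hq hy
              (u_mono' s τ τΔ h2
                (mul_pos_of_neg_of_neg (by linarith) (by linarith)))
          calc ρ τstar ≤ ρ τΔ := by rw [hmin]; exact min_le_right _ _
            _ ≤ ρ τ := this
end

section
/- Assume Δ‖a‖ ≥ 1 + ε₀, a_τ ≥ 0 and aᵀg ≠ 0. Define τ* = −τ_Δ if a_τ = 0; τ* = max{−τ_Δ, τ_cp} if a_τ > 0 and aᵀg > 0; τ* = min{τ_cp, τ_d} if a_τ > 0 and aᵀg < 0. Then τ* lies in Ω = [−τ_Δ, τ_d] ∪ [τ_u, τ_Δ] and ρ(τ*) ≤ ρ(τ) for every τ ∈ Ω. -/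
open scoped RealInnerProductSpace

set_option maxHeartbeats 2000000 in
theorem stmt_7 {{n : ℕ}} (hn : 1 ≤ n)
    (a g : EuclideanSpace ℝ (Fin n)) (ha : a ≠ 0)
    (B : Matrix (Fin n) (Fin n) ℝ) (hBs : B.IsSymm) (hBpd : B.PosDef)
    (ρ : ℝ → ℝ)
    (hρ : ∀ τ : ℝ, τ ≠ 1 / ‖a‖ ^ 2 →
      ρ τ = τ * ⟪a, g⟫ / (1 - τ * ‖a‖ ^ 2)
        + τ ^ 2 * ⟪a, Matrix.toEuclideanLin B a⟫ / (2 * (1 - τ * ‖a‖ ^ 2) ^ 2))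
    (aτ τm : ℝ)
    (haτ : aτ = ⟪a, Matrix.toEuclideanLin B a⟫ - ‖a‖ ^ 2 * ⟪a, g⟫)
    (hτm : τm = 1 / ‖a‖ ^ 2)
    (τcp : ℝ) (hτcp : aτ ≠ 0 → τcp = -⟪a, g⟫ / aτ)
    (Δ ε₀ : ℝ) (hΔ : 0 < Δ) (hε₀ : 0 < ε₀) (hε₁ : ε₀ < 1)
    (τΔ τd τu : ℝ) (hτΔ : τΔ = Δ / ‖a‖) (hτd : τd = (1 - ε₀) / ‖a‖ ^ 2)
    (hτu : τu = (1 + ε₀) / ‖a‖ ^ 2)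
    (hcase : 1 + ε₀ ≤ Δ * ‖a‖) (haτnn : 0 ≤ aτ) (hag : ⟪a, g⟫ ≠ 0)
    (τstar : ℝ)
    (hτs1 : aτ = 0 → τstar = -τΔ)
    (hτs2 : 0 < aτ → 0 < ⟪a, g⟫ → τstar = max (-τΔ) τcp)
    (hτs3 : 0 < aτ → ⟪a, g⟫ < 0 → τstar = min τcp τd) :
    τstar ∈ Set.Icc (-τΔ) τd ∪ Set.Icc τu τΔ ∧
      ∀ τ ∈ Set.Icc (-τΔ) τd ∪ Set.Icc τu τΔ, ρ τstar ≤ ρ τ := by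
  set s : ℝ := ‖a‖ ^ 2 with hsdef
  set c : ℝ := ⟪a, g⟫ with hcdef
  set b : ℝ := ⟪a, Matrix.toEuclideanLin B a⟫ with hbdef
  have hna : (0:ℝ) < ‖a‖ := norm_pos_iff.mpr ha
  have hs : 0 < s := by rw [hsdef]; positivity
  have hb : 0 < b := by
    rw [hbdef]
    have hx : (WithLp.equiv 2 (Fin n → ℝ)) a ≠ 0 := by simpa using ha
    have := hBpd.re_dotProduct_pos hx
    simpa [EuclideanSpace.inner_eq_star_dotProduct, Matrix.toEuclideanLin_apply, dotProduct_comm (B.mulVec _)] using this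
  have hbeq : aτ + s * c = b := by rw [haτ]; ring
  have hbc : 0 < aτ + s * c := by rw [hbeq]; exact hb
  -- basic numeric facts
  have hds : τd * s = 1 - ε₀ := by rw [hτd]; field_simp
  have hus : τu * s = 1 + ε₀ := by rw [hτu]; field_simp
  have hΔs : 1 + ε₀ ≤ τΔ * s := by
    have : τΔ * s = Δ * ‖a‖ := by rw [hτΔ, hsdef]; field_simp
    linarith [this, hcase]
  have hτΔ0 : 0 < τΔ := by rw [hτΔ]; positivity
  have hτd0 : 0 < τd := by rw [hτd]; exact div_pos (by linarith) hs
  have key : ∀ x : ℝ, 1 - x * s ≠ 0 →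
      ρ x = ((c + aτ * x) / (1 - x * s)) ^ 2 / (2 * b) - c ^ 2 / (2 * b) := by
    intro x hx
    have hx' : x ≠ 1 / s := by
      intro h; apply hx; rw [h]; field_simp; ring
    rw [hρ x hx', haτ]
    field_simp
    ring
  have main : ∀ x y : ℝ, 1 - x * s ≠ 0 → 1 - y * s ≠ 0 →
      ((c + aτ * x) * (1 - y * s)) ^ 2 ≤ ((c + aτ * y) * (1 - x * s)) ^ 2 →
      ρ x ≤ ρ y := by
    intro x y hx hy hpoly
    rw [key x hx, key y hy]
    have hx2 : (0:ℝ) < (1 - x * s) ^ 2 :=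
      lt_of_le_of_ne (sq_nonneg _) (Ne.symm (pow_ne_zero 2 hx))
    have hy2 : (0:ℝ) < (1 - y * s) ^ 2 :=
      lt_of_le_of_ne (sq_nonneg _) (Ne.symm (pow_ne_zero 2 hy))
    have h1 : ((c + aτ * x) / (1 - x * s)) ^ 2 ≤ ((c + aτ * y) / (1 - y * s)) ^ 2 := by
      rw [div_pow, div_pow, div_le_div_iff₀ hx2 hy2]
      calc (c + aτ * x) ^ 2 * (1 - y * s) ^ 2 = ((c + aτ * x) * (1 - y * s)) ^ 2 := by ring
        _ ≤ ((c + aτ * y) * (1 - x * s)) ^ 2 := hpoly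
        _ = (c + aτ * y) ^ 2 * (1 - x * s) ^ 2 := by ring
    have h2b : (0:ℝ) < 2 * b := by linarith
    have := (div_le_div_iff_of_pos_right h2b).mpr h1
    linarith
  rcases haτnn.eq_or_lt with h0 | h0
  · -- aτ = 0
    have ht0 := hτs1 h0.symm
    have hcb : b = s * c := by rw [haτ] at h0; linarith
    have hcpos : 0 < c := by
      by_contra h
      push_neg at h
      linarith [mul_nonpos_of_nonneg_of_nonpos hs.le h]
    have hxs : 1 - τstar * s ≠ 0 := by
      rw [ht0]; exact ne_of_gt (by linarith)
    constructor
    · left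
      exact ⟨by rw [ht0], by rw [ht0]; linarith⟩
    · rintro τ (⟨h1, h2⟩ | ⟨h1, h2⟩)
      · have hτs' : τ * s ≤ 1 - ε₀ := by linarith [mul_le_mul_of_nonneg_right h2 hs.le]
        have hτs'' : -(τΔ * s) ≤ τ * s := by linarith [mul_le_mul_of_nonneg_right h1 hs.le]
        refine main τstar τ hxs (ne_of_gt (by linarith)) ?_
        rw [ht0, ← h0]
        simp only [zero_mul, add_zero]
        refine sq_le_sq' ?_ ?_
        · linarith [mul_nonneg hcpos.le (show (0:ℝ) ≤ (1 - τ * s) + (1 - -τΔ * s) by linarith)]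
        · linarith [mul_nonneg hcpos.le (show (0:ℝ) ≤ (1 - -τΔ * s) - (1 - τ * s) by linarith)]
      · have hτs' : 1 + ε₀ ≤ τ * s := by linarith [mul_le_mul_of_nonneg_right h1 hs.le]
        have hτs'' : τ * s ≤ τΔ * s := mul_le_mul_of_nonneg_right h2 hs.le
        refine main τstar τ hxs (ne_of_lt (by linarith)) ?_
        rw [ht0, ← h0]
        simp only [zero_mul, add_zero]
        refine sq_le_sq' ?_ ?_
        · linarith [mul_nonneg hcpos.le (show (0:ℝ) ≤ (1 - τ * s) + (1 - -τΔ * s) by linarith)]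
        · linarith [mul_nonneg hcpos.le (show (0:ℝ) ≤ (1 - -τΔ * s) - (1 - τ * s) by linarith)]
  · -- 0 < aτ
    have htcp := hτcp h0.ne'
    rcases hag.lt_or_gt with hc | hc
    · -- c < 0 : τstar = min τcp τd
      have ht0 := hτs3 h0 hc
      have htcp0 : 0 < τcp := by rw [htcp]; exact div_pos (by linarith) h0
      have hts1 : 0 < τstar := by rw [ht0]; exact lt_min htcp0 hτd0
      have hts2 : τstar ≤ τd := by rw [ht0]; exact min_le_right _ _
      have hxs0 : ε₀ ≤ 1 - τstar * s := by
        linarith [mul_le_mul_of_nonneg_right hts2 hs.le]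
      have hxs : 1 - τstar * s ≠ 0 := by linarith
      constructor
      · left; exact ⟨by linarith, hts2⟩
      · rintro τ (⟨h1, h2⟩ | ⟨h1, h2⟩)
        · have hd1 : ε₀ ≤ 1 - τ * s := by linarith [mul_le_mul_of_nonneg_right h2 hs.le]
          refine main τstar τ hxs (ne_of_gt (by linarith)) ?_
          rcases le_or_gt τcp τd with hmin | hmin
          · have hfz : c + aτ * τstar = 0 := by
              rw [ht0, min_eq_left hmin, htcp]; field_simp; ring
            rw [hfz]
            simpa using sq_nonneg ((c + aτ * τ) * (1 - τstar * s))
          · have he : τstar = τd := by rw [ht0, min_eq_right hmin.le]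
            have hneg : c + aτ * τstar < 0 := by
              have h' : τd < -c / aτ := htcp ▸ hmin
              have := (lt_div_iff₀ h0).1 h'
              rw [he]; linarith
            have hY : (c + aτ * τstar) * (1 - τ * s) ≤ 0 :=
              mul_nonpos_of_nonpos_of_nonneg (by linarith) (by linarith)
            have hX : (c + aτ * τ) * (1 - τstar * s) ≤ (c + aτ * τstar) * (1 - τ * s) := by
              linarith [mul_nonneg hbc.le (show (0:ℝ) ≤ τstar - τ by rw [he]; linarith)]
            calc ((c + aτ * τstar) * (1 - τ * s)) ^ 2
                ≤ (-((c + aτ * τ) * (1 - τstar * s))) ^ 2 :=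
                  sq_le_sq' (by linarith) (by linarith)
              _ = ((c + aτ * τ) * (1 - τstar * s)) ^ 2 := by ring
        · have hd1 : 1 + ε₀ ≤ τ * s := by linarith [mul_le_mul_of_nonneg_right h1 hs.le]
          have hd2 : τ * s ≤ τΔ * s := mul_le_mul_of_nonneg_right h2 hs.le
          refine main τstar τ hxs (ne_of_lt (by linarith)) ?_
          rcases le_or_gt τcp τd with hmin | hmin
          · have hfz : c + aτ * τstar = 0 := by
              rw [ht0, min_eq_left hmin, htcp]; field_simp; ring
            rw [hfz]
            simpa using sq_nonneg ((c + aτ * τ) * (1 - τstar * s))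
          · have he : τstar = τd := by rw [ht0, min_eq_right hmin.le]
            have hneg : c + aτ * τstar < 0 := by
              have h' : τd < -c / aτ := htcp ▸ hmin
              have := (lt_div_iff₀ h0).1 h'
              rw [he]; linarith
            have hτd' : τd ≤ τ := by
              by_contra h
              push_neg at h
              linarith [mul_le_mul_of_nonneg_right h.le hs.le]
            have hY : 0 ≤ (c + aτ * τstar) * (1 - τ * s) := by
              have h' := mul_nonneg (show (0:ℝ) ≤ -(c + aτ * τstar) by linarith)
                (show (0:ℝ) ≤ -(1 - τ * s) by linarith)
              linarith [h']
            have hX : (c + aτ * τstar) * (1 - τ * s) ≤ (c + aτ * τ) * (1 - τstar * s) := by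
              linarith [mul_nonneg hbc.le (show (0:ℝ) ≤ τ - τstar by rw [he]; linarith)]
            exact sq_le_sq' (by linarith) hX
    · -- c > 0 : τstar = max (-τΔ) τcp
      have ht0 := hτs2 h0 hc
      have htcp0 : τcp < 0 := by
        rw [htcp]; exact div_neg_of_neg_of_pos (by linarith) h0
      have hts1 : -τΔ ≤ τstar := by rw [ht0]; exact le_max_left _ _
      have hts2 : τstar ≤ 0 := by rw [ht0]; exact max_le (by linarith) htcp0.le
      have hxs0 : (1:ℝ) ≤ 1 - τstar * s := by
        linarith [mul_nonneg (neg_nonneg.2 hts2) hs.le]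
      have hxs : 1 - τstar * s ≠ 0 := by linarith
      constructor
      · left; exact ⟨hts1, by linarith⟩
      · rintro τ (⟨h1, h2⟩ | ⟨h1, h2⟩)
        · have hd1 : ε₀ ≤ 1 - τ * s := by linarith [mul_le_mul_of_nonneg_right h2 hs.le]
          refine main τstar τ hxs (ne_of_gt (by linarith)) ?_
          rcases le_or_gt (-τΔ) τcp with hmax | hmax
          · have hfz : c + aτ * τstar = 0 := by
              rw [ht0, max_eq_right hmax, htcp]; field_simp; ring
            rw [hfz]
            simpa using sq_nonneg ((c + aτ * τ) * (1 - τstar * s))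
          · have he : τstar = -τΔ := by rw [ht0, max_eq_left hmax.le]
            have hpos : 0 < c + aτ * τstar := by
              have h' : -c / aτ < -τΔ := htcp ▸ hmax
              have := (div_lt_iff₀ h0).1 h'
              rw [he]; linarith
            have hY : 0 ≤ (c + aτ * τstar) * (1 - τ * s) :=
              mul_nonneg hpos.le (by linarith)
            have hX : (c + aτ * τstar) * (1 - τ * s) ≤ (c + aτ * τ) * (1 - τstar * s) := by
              linarith [mul_nonneg hbc.le (show (0:ℝ) ≤ τ - τstar by rw [he]; linarith)]
            exact sq_le_sq' (by linarith) hX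
        · have hd1 : 1 + ε₀ ≤ τ * s := by linarith [mul_le_mul_of_nonneg_right h1 hs.le]
          have hd2 : τ * s ≤ τΔ * s := mul_le_mul_of_nonneg_right h2 hs.le
          have hτpos : 0 < τ := by
            by_contra h
            push_neg at h
            linarith [mul_nonneg (neg_nonneg.2 h) hs.le]
          refine main τstar τ hxs (ne_of_lt (by linarith)) ?_
          rcases le_or_gt (-τΔ) τcp with hmax | hmax
          · have hfz : c + aτ * τstar = 0 := by
              rw [ht0, max_eq_right hmax, htcp]; field_simp; ring
            rw [hfz]
            simpa using sq_nonneg ((c + aτ * τ) * (1 - τstar * s))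
          · have he : τstar = -τΔ := by rw [ht0, max_eq_left hmax.le]
            have hpos : 0 < c + aτ * τstar := by
              have h' : -c / aτ < -τΔ := htcp ▸ hmax
              have := (div_lt_iff₀ h0).1 h'
              rw [he]; linarith
            have hnum : 0 < c + aτ * τ := by
              linarith [mul_pos h0 hτpos]
            have hkey : (c + aτ * τstar) * (τ * s - 1) ≤ (c + aτ * τ) * (1 - τstar * s) := by
              rw [he]
              have k1 : (0:ℝ) ≤ aτ * (τ * (1 + τΔ * s) - τΔ) :=
                mul_nonneg h0.le (by
                  linarith [mul_nonneg hτΔ0.le (show (0:ℝ) ≤ τ * s - 1 by linarith)])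
              have k2 : (0:ℝ) ≤ c * (τΔ * s - τ * s) :=
                mul_nonneg hc.le (by linarith)
              have k3 : (0:ℝ) ≤ aτ * τ * (τΔ * s) :=
                mul_nonneg (mul_nonneg h0.le hτpos.le) (by linarith)
              nlinarith [k1, k2, k3]
            refine sq_le_sq' ?_ ?_
            · linarith [hkey]
            · linarith [mul_nonneg hpos.le (show (0:ℝ) ≤ τ * s - 1 by linarith),
                mul_nonneg hnum.le (show (0:ℝ) ≤ 1 - τstar * s by linarith)]
end

section
/- If a_τ ≠ 0, then τ_cp ≠ τ_m and ρ(τ_cp) = −(aᵀg)²/(2·aᵀBa). -/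
open scoped RealInnerProductSpace

theorem stmt_10 {{n : ℕ}} (hn : 1 ≤ n)
    (a g : EuclideanSpace ℝ (Fin n)) (ha : a ≠ 0)
    (B : Matrix (Fin n) (Fin n) ℝ) (hBs : B.IsSymm) (hBpd : B.PosDef)
    (ρ : ℝ → ℝ)
    (hρ : ∀ τ : ℝ, τ ≠ 1 / ‖a‖ ^ 2 →
      ρ τ = τ * ⟪a, g⟫ / (1 - τ * ‖a‖ ^ 2)
        + τ ^ 2 * ⟪a, Matrix.toEuclideanLin B a⟫ / (2 * (1 - τ * ‖a‖ ^ 2) ^ 2))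
    (aτ τm : ℝ)
    (haτ : aτ = ⟪a, Matrix.toEuclideanLin B a⟫ - ‖a‖ ^ 2 * ⟪a, g⟫)
    (hτm : τm = 1 / ‖a‖ ^ 2)
    (τcp : ℝ) (hτcp : aτ ≠ 0 → τcp = -⟪a, g⟫ / aτ)
    (haτne : aτ ≠ 0) :
    τcp ≠ τm ∧ ρ τcp = -⟪a, g⟫ ^ 2 / (2 * ⟪a, Matrix.toEuclideanLin B a⟫) := by
  set q : ℝ := ⟪a, Matrix.toEuclideanLin B a⟫ with hq'
  set s : ℝ := ⟪a, g⟫ with hs'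
  have hq : 0 < q := by
    have h := hBpd.dotProduct_mulVec_pos (x := WithLp.equiv 2 _ a) (by simpa using ha)
    refine h.trans_eq ?_
    rw [hq', EuclideanSpace.inner_eq_star_dotProduct]
    simp [Matrix.toEuclideanLin_apply, dotProduct_comm]
  have hN : (0:ℝ) < ‖a‖ ^ 2 := by have := norm_pos_iff.mpr ha; positivity
  set N : ℝ := ‖a‖ ^ 2
  have hτcp' : τcp = -s / aτ := hτcp haτne
  have hne : τcp ≠ 1 / N := by
    intro h
    rw [hτcp'] at h
    have : -s * N = aτ := by
      field_simp at h
      linarith [h]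
    rw [haτ] at this
    have : q = 0 := by linarith
    linarith
  constructor
  · rw [hτm]; exact hne
  · rw [hρ τcp hne, hτcp']
    have hden : 1 - (-s / aτ) * N = q / aτ := by
      field_simp
      rw [haτ]; ring
    rw [hden]
    have hqa : q / aτ ≠ 0 := div_ne_zero (ne_of_gt hq) haτne
    field_simp
    ring
end

section
/- If a_τ ≠ 0, then ρ(τ_cp) − ρ(−τ_Δ) = −(a_τ·Δ − ‖a‖·(aᵀg))² / (2‖a‖²·(1 + Δ‖a‖)²·aᵀBa). In particular, if moreover a_τ·Δ ≠ ‖a‖·(aᵀg), then ρ(τ_cp) < ρ(−τ_Δ). -/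
open scoped RealInnerProductSpace

theorem stmt_11 {{n : ℕ}} (hn : 1 ≤ n)
    (a g : EuclideanSpace ℝ (Fin n)) (ha : a ≠ 0)
    (B : Matrix (Fin n) (Fin n) ℝ) (hBs : B.IsSymm) (hBpd : B.PosDef)
    (ρ : ℝ → ℝ)
    (hρ : ∀ τ : ℝ, τ ≠ 1 / ‖a‖ ^ 2 →
      ρ τ = τ * ⟪a, g⟫ / (1 - τ * ‖a‖ ^ 2)
        + τ ^ 2 * ⟪a, Matrix.toEuclideanLin B a⟫ / (2 * (1 - τ * ‖a‖ ^ 2) ^ 2))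
    (aτ τm : ℝ)
    (haτ : aτ = ⟪a, Matrix.toEuclideanLin B a⟫ - ‖a‖ ^ 2 * ⟪a, g⟫)
    (hτm : τm = 1 / ‖a‖ ^ 2)
    (τcp : ℝ) (hτcp : aτ ≠ 0 → τcp = -⟪a, g⟫ / aτ)
    (Δ ε₀ : ℝ) (hΔ : 0 < Δ) (hε₀ : 0 < ε₀) (hε₁ : ε₀ < 1)
    (τΔ τd τu : ℝ) (hτΔ : τΔ = Δ / ‖a‖) (hτd : τd = (1 - ε₀) / ‖a‖ ^ 2)
    (hτu : τu = (1 + ε₀) / ‖a‖ ^ 2)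
    (haτne : aτ ≠ 0) :
    ρ τcp - ρ (-τΔ)
        = -(aτ * Δ - ‖a‖ * ⟪a, g⟫) ^ 2
          / (2 * ‖a‖ ^ 2 * (1 + Δ * ‖a‖) ^ 2 * ⟪a, Matrix.toEuclideanLin B a⟫) ∧
      (aτ * Δ ≠ ‖a‖ * ⟪a, g⟫ → ρ τcp < ρ (-τΔ)) := by
  set q : ℝ := ⟪a, g⟫ with hq
  set b : ℝ := ⟪a, Matrix.toEuclideanLin B a⟫ with hbdef
  have hna : 0 < ‖a‖ := norm_pos_iff.mpr ha
  have hA : 0 < ‖a‖ ^ 2 := by positivity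
  have hb : 0 < b := by
    have hx : (WithLp.equiv 2 (Fin n → ℝ)) a ≠ 0 := by
      simpa using (WithLp.equiv 2 (Fin n → ℝ)).injective.ne_iff.mpr
        (show a ≠ (WithLp.equiv 2 (Fin n → ℝ)).symm 0 by simpa using ha)
    have := hBpd.dotProduct_mulVec_pos hx
    simpa [hbdef, EuclideanSpace.inner_eq_star_dotProduct,
      Matrix.toEuclideanLin_apply, dotProduct_comm (B.mulVec _)] using this
  have hD : 0 < 1 + Δ * ‖a‖ := by positivity
  have hτcp' : τcp = -q / aτ := hτcp haτne
  -- 1 - τcp * ‖a‖^2 = b / aτ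
  have hone : 1 - τcp * ‖a‖ ^ 2 = b / aτ := by
    rw [hτcp']; field_simp; linarith [haτ]
  have hcpne : τcp ≠ 1 / ‖a‖ ^ 2 := by
    intro h
    have : 1 - τcp * ‖a‖ ^ 2 = 0 := by rw [h]; field_simp; ring
    rw [hone] at this
    exact hb.ne' (by field_simp at this; simpa using this)
  have hΔne : -τΔ ≠ 1 / ‖a‖ ^ 2 := by
    rw [hτΔ]
    intro h
    have h1 : -(Δ / ‖a‖) * ‖a‖ ^ 2 < 0 := by
      have : 0 < Δ / ‖a‖ * ‖a‖ ^ 2 := by positivity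
      linarith
    rw [h] at h1
    have : 0 < 1 / ‖a‖ ^ 2 * ‖a‖ ^ 2 := by positivity
    linarith
  have hρcp : ρ τcp = -q ^ 2 / (2 * b) := by
    rw [hρ τcp hcpne, hone, hτcp']
    field_simp
    ring
  have hone2 : 1 - (-τΔ) * ‖a‖ ^ 2 = 1 + Δ * ‖a‖ := by
    rw [hτΔ]; field_simp; ring
  have hρΔ : ρ (-τΔ) = -(Δ / ‖a‖) * q / (1 + Δ * ‖a‖)
      + (Δ / ‖a‖) ^ 2 * b / (2 * (1 + Δ * ‖a‖) ^ 2) := by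
    rw [hρ _ hΔne, hone2, hτΔ]
    ring
  have key : ρ τcp - ρ (-τΔ)
      = -(aτ * Δ - ‖a‖ * q) ^ 2 / (2 * ‖a‖ ^ 2 * (1 + Δ * ‖a‖) ^ 2 * b) := by
    rw [hρcp, hρΔ, haτ]
    field_simp
    ring
  refine ⟨key, fun hne => ?_⟩
  have hnum : 0 < (aτ * Δ - ‖a‖ * q) ^ 2 := by
    have : aτ * Δ - ‖a‖ * q ≠ 0 := sub_ne_zero.mpr hne
    positivity
  have hden : 0 < 2 * ‖a‖ ^ 2 * (1 + Δ * ‖a‖) ^ 2 * b := by positivity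
  have : ρ τcp - ρ (-τΔ) < 0 := by
    rw [key]; exact div_neg_of_neg_of_pos (by linarith) hden
  linarith
end

section
/- If a_τ < 0, Δ‖a‖ ≥ 1 + ε₀, and τ_cp ≤ τ_u, then ρ(τ_u) < ρ(−τ_Δ). -/
open scoped RealInnerProductSpace

set_option maxHeartbeats 1000000 in
theorem stmt_13 {{n : ℕ}} (hn : 1 ≤ n)
    (a g : EuclideanSpace ℝ (Fin n)) (ha : a ≠ 0)
    (B : Matrix (Fin n) (Fin n) ℝ) (hBs : B.IsSymm) (hBpd : B.PosDef)
    (ρ : ℝ → ℝ)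
    (hρ : ∀ τ : ℝ, τ ≠ 1 / ‖a‖ ^ 2 →
      ρ τ = τ * ⟪a, g⟫ / (1 - τ * ‖a‖ ^ 2)
        + τ ^ 2 * ⟪a, Matrix.toEuclideanLin B a⟫ / (2 * (1 - τ * ‖a‖ ^ 2) ^ 2))
    (aτ τm : ℝ)
    (haτ : aτ = ⟪a, Matrix.toEuclideanLin B a⟫ - ‖a‖ ^ 2 * ⟪a, g⟫)
    (hτm : τm = 1 / ‖a‖ ^ 2)
    (τcp : ℝ) (hτcp : aτ ≠ 0 → τcp = -⟪a, g⟫ / aτ)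
    (Δ ε₀ : ℝ) (hΔ : 0 < Δ) (hε₀ : 0 < ε₀) (hε₁ : ε₀ < 1)
    (τΔ τd τu : ℝ) (hτΔ : τΔ = Δ / ‖a‖) (hτd : τd = (1 - ε₀) / ‖a‖ ^ 2)
    (hτu : τu = (1 + ε₀) / ‖a‖ ^ 2)
    (haτneg : aτ < 0) (hcase : 1 + ε₀ ≤ Δ * ‖a‖) (hle : τcp ≤ τu) :
    ρ τu < ρ (-τΔ) := by
  have hN : (0:ℝ) < ‖a‖ := norm_pos_iff.mpr ha
  set N := ‖a‖ with hNdef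
  set s := N ^ 2 with hsdef
  have hs : (0:ℝ) < s := by positivity
  set c := ⟪a, g⟫ with hcdef
  set b := ⟪a, Matrix.toEuclideanLin B a⟫ with hbdef
  -- positivity of b
  have hb : 0 < b := by
    have hx : (WithLp.equiv 2 (Fin n → ℝ)) a ≠ 0 := by
      simpa using ha
    have hpos := hBpd.re_dotProduct_pos hx
    have : b = dotProduct (star ((WithLp.equiv 2 (Fin n → ℝ)) a))
        (Matrix.mulVec B ((WithLp.equiv 2 (Fin n → ℝ)) a)) := by
      rw [hbdef]
      simp [Matrix.toEuclideanLin_apply, PiLp.inner_apply, dotProduct, mul_comm]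
    rw [this]
    simpa using hpos
  clear_value N s c b
  have hsc : b < s * c := by
    have := haτneg
    rw [haτ] at this
    linarith
  have hc : 0 < c := by nlinarith
  have haτne : aτ ≠ 0 := ne_of_lt haτneg
  have hτcp' := hτcp haτne
  -- key inequality : (1+ε₀) * b ≤ ε₀ * s * c
  have hkey : (1 + ε₀) * b ≤ ε₀ * s * c := by
    have hpos : 0 < -aτ := by linarith
    have h1 : τcp = c / (-aτ) := by rw [hτcp']; field_simp
    have h2 : c / (-aτ) ≤ (1 + ε₀) / s := by rw [← h1, ← hτu]; exact hle
    rw [div_le_div_iff₀ hpos hs] at h2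
    have haτ' : -aτ = s * c - b := by rw [haτ]; ring
    rw [haτ'] at h2
    nlinarith
  -- formula for ρ τu
  have hsn : s ≠ 0 := ne_of_gt hs
  have hεn : ε₀ ≠ 0 := ne_of_gt hε₀
  have hNn : N ≠ 0 := ne_of_gt hN
  have hτune : τu ≠ 1 / s := by
    rw [hτu]
    intro h
    rw [div_eq_div_iff hsn hsn] at h
    nlinarith
  have hρu : ρ τu = (-(2 * (1 + ε₀) * s * ε₀ * c) + (1 + ε₀) ^ 2 * b) / (2 * s ^ 2 * ε₀ ^ 2) := by
    rw [hρ τu hτune, hτu]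
    have e1 : 1 - (1 + ε₀) / s * s = -ε₀ := by field_simp; ring
    rw [e1]
    field_simp
  -- formula for ρ (-τΔ)
  set D := Δ * N with hDdef
  clear_value D
  have hD : (0:ℝ) < D := by nlinarith
  have h1D : (0:ℝ) < 1 + D := by linarith
  have hτΔne : -τΔ ≠ 1 / s := by
    have h0 : 0 < τΔ := by rw [hτΔ]; exact div_pos hΔ hN
    intro h
    have h2 : (0:ℝ) < 1 / s := one_div_pos.mpr hs
    linarith [h ▸ (neg_neg_of_pos h0 : -τΔ < 0)]
  have hρd : ρ (-τΔ) = (D ^ 2 * b - 2 * D * (1 + D) * s * c) / (2 * s ^ 2 * (1 + D) ^ 2) := by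
    rw [hρ (-τΔ) hτΔne, hτΔ]
    have e1 : 1 - -(Δ / N) * s = 1 + D := by rw [hsdef, hDdef]; field_simp; ring
    have h1D' : (1:ℝ) + D ≠ 0 := ne_of_gt h1D
    rw [e1, hDdef, hsdef]
    have h1D'' : (1:ℝ) + Δ * N ≠ 0 := by rw [hDdef] at h1D'; exact h1D'
    field_simp
    ring
  -- bounds
  have hden1 : (0:ℝ) < 2 * s ^ 2 * ε₀ ^ 2 := by positivity
  have hden2 : (0:ℝ) < 2 * s * ε₀ := by positivity
  have h1 : ρ τu ≤ -((1 + ε₀) * c) / (2 * s * ε₀) := by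
    rw [hρu, div_le_div_iff₀ hden1 hden2]
    nlinarith [hkey, mul_pos (mul_pos hs hε₀) (show (0:ℝ) < 1 + ε₀ by linarith)]
  have h2 : -c / s < ρ (-τΔ) := by
    rw [hρd, div_lt_div_iff₀ hs (mul_pos (by positivity : (0:ℝ) < 2 * s ^ 2) (pow_pos h1D 2))]
    nlinarith [mul_pos hs (mul_pos (mul_pos hD hD) hb),
      mul_pos (mul_pos hs hs) (mul_pos h1D hc)]
  have h3 : -((1 + ε₀) * c) / (2 * s * ε₀) < -c / s := by
    rw [div_lt_div_iff₀ hden2 hs]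
    nlinarith [mul_pos hs hc]
  linarith
end

section
/- If aᵀg < 0, Δ‖a‖ < 1, and Δ·a_τ + ‖a‖·(aᵀg) ≤ 0, then −ρ(τ_Δ) ≥ −Δ·(aᵀg)/(2‖a‖); in particular −ρ(τ_Δ) > 0. -/
open scoped RealInnerProductSpace

theorem stmt_14 {{n : ℕ}} (hn : 1 ≤ n)
    (a g : EuclideanSpace ℝ (Fin n)) (ha : a ≠ 0)
    (B : Matrix (Fin n) (Fin n) ℝ) (hBs : B.IsSymm) (hBpd : B.PosDef)
    (ρ : ℝ → ℝ)
    (hρ : ∀ τ : ℝ, τ ≠ 1 / ‖a‖ ^ 2 →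
      ρ τ = τ * ⟪a, g⟫ / (1 - τ * ‖a‖ ^ 2)
        + τ ^ 2 * ⟪a, Matrix.toEuclideanLin B a⟫ / (2 * (1 - τ * ‖a‖ ^ 2) ^ 2))
    (aτ τm : ℝ)
    (haτ : aτ = ⟪a, Matrix.toEuclideanLin B a⟫ - ‖a‖ ^ 2 * ⟪a, g⟫)
    (hτm : τm = 1 / ‖a‖ ^ 2)
    (Δ : ℝ) (hΔ : 0 < Δ) (τΔ : ℝ) (hτΔ : τΔ = Δ / ‖a‖)
    (hag : ⟪a, g⟫ < 0) (hsmall : Δ * ‖a‖ < 1) (hcond : Δ * aτ + ‖a‖ * ⟪a, g⟫ ≤ 0) :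
    -ρ τΔ ≥ -Δ * ⟪a, g⟫ / (2 * ‖a‖) ∧ 0 < -ρ τΔ := by
  set s := ‖a‖ with hsdef
  have hs : 0 < s := norm_pos_iff.mpr ha
  set c := (⟪a, g⟫ : ℝ)
  set b := (⟪a, Matrix.toEuclideanLin B a⟫ : ℝ)
  have hne : τΔ ≠ 1 / s ^ 2 := by
    intro h
    have : τΔ * s ^ 2 = Δ * s := by rw [hτΔ]; field_simp
    rw [h] at this
    have h1 : (1 : ℝ) = Δ * s := by
      field_simp at this; linarith [this]
    linarith
  have hval := hρ τΔ hne
  have hu : 0 < 1 - Δ * s := by linarith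
  have huτ : 1 - τΔ * s ^ 2 = 1 - Δ * s := by
    rw [hτΔ]; field_simp
  rw [huτ, hτΔ] at hval
  have hcond' : Δ * b ≤ -s * c * (1 - Δ * s) := by
    rw [haτ] at hcond; nlinarith
  have key : ρ (Δ / s) ≤ Δ * c / (2 * s) := by
    set u := 1 - Δ * s with hudef
    have h2 : Δ ^ 2 * b ≤ Δ * (-s * c * u) :=
      mul_le_mul_of_nonneg_left hcond' hΔ.le |>.trans_eq' (by ring)
    have hnum : 0 ≤ Δ * c * s * u * (u - 2) - Δ ^ 2 * b := by
      nlinarith [mul_nonneg (mul_nonneg (mul_nonneg (mul_nonneg hΔ.le hs.le) hu.le)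
        (neg_nonneg.mpr hag.le)) (by nlinarith : (0:ℝ) ≤ 1 - u)]
    have heq : Δ * c / (2 * s) - ρ (Δ / s)
        = (Δ * c * s * u * (u - 2) - Δ ^ 2 * b) / (2 * s ^ 2 * u ^ 2) := by
      rw [hval]; field_simp; ring
    have : 0 ≤ Δ * c / (2 * s) - ρ (Δ / s) := by
      rw [heq]
      exact div_nonneg hnum (by positivity)
    linarith
  rw [hτΔ]
  constructor
  · have h3 : -Δ * c / (2 * s) = -(Δ * c / (2 * s)) := by ring
    rw [h3]
    exact neg_le_neg key
  · have : Δ * c / (2 * s) < 0 := div_neg_of_neg_of_pos (by nlinarith) (by positivity)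
    linarith
end

section
/- If aᵀg > 0 and −Δ·a_τ + ‖a‖·(aᵀg) ≥ 0, then −ρ(−τ_Δ) ≥ Δ·(aᵀg)/(2‖a‖·(1 + Δ‖a‖)); in particular −ρ(−τ_Δ) > 0. -/
open scoped RealInnerProductSpace

theorem stmt_15 {{n : ℕ}} (hn : 1 ≤ n)
    (a g : EuclideanSpace ℝ (Fin n)) (ha : a ≠ 0)
    (B : Matrix (Fin n) (Fin n) ℝ) (hBs : B.IsSymm) (hBpd : B.PosDef)
    (ρ : ℝ → ℝ)
    (hρ : ∀ τ : ℝ, τ ≠ 1 / ‖a‖ ^ 2 →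
      ρ τ = τ * ⟪a, g⟫ / (1 - τ * ‖a‖ ^ 2)
        + τ ^ 2 * ⟪a, Matrix.toEuclideanLin B a⟫ / (2 * (1 - τ * ‖a‖ ^ 2) ^ 2))
    (aτ τm : ℝ)
    (haτ : aτ = ⟪a, Matrix.toEuclideanLin B a⟫ - ‖a‖ ^ 2 * ⟪a, g⟫)
    (hτm : τm = 1 / ‖a‖ ^ 2)
    (Δ : ℝ) (hΔ : 0 < Δ) (τΔ : ℝ) (hτΔ : τΔ = Δ / ‖a‖)
    (hag : 0 < ⟪a, g⟫) (hcond : 0 ≤ -Δ * aτ + ‖a‖ * ⟪a, g⟫) :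
    -ρ (-τΔ) ≥ Δ * ⟪a, g⟫ / (2 * ‖a‖ * (1 + Δ * ‖a‖)) ∧ 0 < -ρ (-τΔ) := by
  have hs : 0 < ‖a‖ := norm_pos_iff.mpr ha
  set s := ‖a‖ with hsdef
  set c := ⟪a, g⟫ with hcdef
  set q := ⟪a, Matrix.toEuclideanLin B a⟫ with hqdef
  have h1 : (0:ℝ) < 1 + Δ * s := by positivity
  have hne : -τΔ ≠ 1 / s ^ 2 := by
    rw [hτΔ]
    intro h
    have h2 : (0:ℝ) < 1 / s ^ 2 := by positivity
    have h3 : (0:ℝ) < Δ / s := by positivity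
    linarith [h.symm.le]
  have hρv := hρ (-τΔ) hne
  rw [hτΔ] at hρv
  have hden : 1 - -(Δ / s) * s ^ 2 = 1 + Δ * s := by
    field_simp
    ring
  rw [hden] at hρv
  have key : -ρ (-τΔ) - Δ * c / (2 * s * (1 + Δ * s))
      = Δ * (-Δ * aτ + s * c) / (2 * s ^ 2 * (1 + Δ * s) ^ 2) := by
    rw [hτΔ, hρv, haτ]
    field_simp
    ring
  have hkey : 0 ≤ Δ * (-Δ * aτ + s * c) / (2 * s ^ 2 * (1 + Δ * s) ^ 2) := by
    apply div_nonneg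
    · exact mul_nonneg hΔ.le hcond
    · positivity
  have hrhs : 0 < Δ * c / (2 * s * (1 + Δ * s)) := by positivity
  constructor
  · linarith [key ▸ hkey]
  · linarith [key ▸ hkey]
end

section
/- If a_τ > 0, aᵀg < 0, and τ_d ≤ τ_cp, then −ρ(τ_d) ≥ −(1 − ε₀)·(aᵀg)/(2ε₀‖a‖²); in particular −ρ(τ_d) > 0. -/
open scoped RealInnerProductSpace

theorem stmt_16 {{n : ℕ}} (hn : 1 ≤ n)
    (a g : EuclideanSpace ℝ (Fin n)) (ha : a ≠ 0)
    (B : Matrix (Fin n) (Fin n) ℝ) (hBs : B.IsSymm) (hBpd : B.PosDef)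
    (ρ : ℝ → ℝ)
    (hρ : ∀ τ : ℝ, τ ≠ 1 / ‖a‖ ^ 2 →
      ρ τ = τ * ⟪a, g⟫ / (1 - τ * ‖a‖ ^ 2)
        + τ ^ 2 * ⟪a, Matrix.toEuclideanLin B a⟫ / (2 * (1 - τ * ‖a‖ ^ 2) ^ 2))
    (aτ τm : ℝ)
    (haτ : aτ = ⟪a, Matrix.toEuclideanLin B a⟫ - ‖a‖ ^ 2 * ⟪a, g⟫)
    (hτm : τm = 1 / ‖a‖ ^ 2)
    (τcp : ℝ) (hτcp : aτ ≠ 0 → τcp = -⟪a, g⟫ / aτ)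
    (ε₀ : ℝ) (hε₀ : 0 < ε₀) (hε₁ : ε₀ < 1)
    (τd τu : ℝ) (hτd : τd = (1 - ε₀) / ‖a‖ ^ 2) (hτu : τu = (1 + ε₀) / ‖a‖ ^ 2)
    (haτpos : 0 < aτ) (hag : ⟪a, g⟫ < 0) (hle : τd ≤ τcp) :
    -ρ τd ≥ -(1 - ε₀) * ⟪a, g⟫ / (2 * ε₀ * ‖a‖ ^ 2) ∧ 0 < -ρ τd := by
  have hs : 0 < ‖a‖ ^ 2 := by
    have := norm_pos_iff.mpr ha
    positivity
  set s := ‖a‖ ^ 2 with hsdef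
  set c := ⟪a, Matrix.toEuclideanLin B a⟫ with hcdef
  set G := ⟪a, g⟫ with hGdef
  have hτdne : τd ≠ 1 / s := by
    rw [hτd]
    intro h
    rw [div_eq_div_iff (ne_of_gt hs) (ne_of_gt hs)] at h
    nlinarith
  have hrange := hρ τd hτdne
  have h1 : 1 - τd * s = ε₀ := by
    rw [hτd]; field_simp; ring
  rw [h1] at hrange
  have hcp := hτcp (ne_of_gt haτpos)
  have hτds : τd * s = 1 - ε₀ := by rw [hτd]; field_simp
  have hτdpos : 0 < τd := by
    rw [hτd]; exact div_pos (by linarith) hs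
  have hkey : τd * c ≤ -ε₀ * G := by
    rw [hcp] at hle
    have h2 : τd * aτ ≤ -G := by
      rw [le_div_iff₀ haτpos] at hle; linarith
    rw [haτ] at h2
    nlinarith
  have hmain : ρ τd ≤ τd * G / (2 * ε₀) := by
    rw [hrange]
    rw [div_add_div _ _ (ne_of_gt hε₀) (by positivity : (2 * ε₀ ^ 2 : ℝ) ≠ 0),
      div_le_div_iff₀ (by positivity) (by positivity)]
    nlinarith [mul_le_mul_of_nonneg_left hkey (by positivity : (0:ℝ) ≤ 2 * ε₀ ^ 2 * τd)]
  have heq : τd * G / (2 * ε₀) = (1 - ε₀) * G / (2 * ε₀ * s) := by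
    rw [hτd, div_mul_eq_mul_div, div_div, mul_comm s (2 * ε₀)]
  have hrhs : 0 < -(1 - ε₀) * G / (2 * ε₀ * s) := by
    apply div_pos (by nlinarith) (by positivity)
  constructor
  · rw [ge_iff_le, neg_mul, neg_div, neg_le_neg_iff]
    calc ρ τd ≤ τd * G / (2 * ε₀) := hmain
      _ = (1 - ε₀) * G / (2 * ε₀ * s) := heq
  · have : ρ τd ≤ (1 - ε₀) * G / (2 * ε₀ * s) := heq ▸ hmain
    rw [neg_mul, neg_div] at hrhs
    linarith
end

section
/- If a_τ < 0 and τ_cp ≤ τ_u, then aᵀg > 0 and −ρ(τ_u) ≥ (1 + ε₀)·(aᵀg)/(2ε₀‖a‖²); in particular −ρ(τ_u) > 0. -/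
open scoped RealInnerProductSpace

theorem stmt_17 {{n : ℕ}} (hn : 1 ≤ n)
    (a g : EuclideanSpace ℝ (Fin n)) (ha : a ≠ 0)
    (B : Matrix (Fin n) (Fin n) ℝ) (hBs : B.IsSymm) (hBpd : B.PosDef)
    (ρ : ℝ → ℝ)
    (hρ : ∀ τ : ℝ, τ ≠ 1 / ‖a‖ ^ 2 →
      ρ τ = τ * ⟪a, g⟫ / (1 - τ * ‖a‖ ^ 2)
        + τ ^ 2 * ⟪a, Matrix.toEuclideanLin B a⟫ / (2 * (1 - τ * ‖a‖ ^ 2) ^ 2))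
    (aτ τm : ℝ)
    (haτ : aτ = ⟪a, Matrix.toEuclideanLin B a⟫ - ‖a‖ ^ 2 * ⟪a, g⟫)
    (hτm : τm = 1 / ‖a‖ ^ 2)
    (τcp : ℝ) (hτcp : aτ ≠ 0 → τcp = -⟪a, g⟫ / aτ)
    (ε₀ : ℝ) (hε₀ : 0 < ε₀) (hε₁ : ε₀ < 1)
    (τd τu : ℝ) (hτd : τd = (1 - ε₀) / ‖a‖ ^ 2) (hτu : τu = (1 + ε₀) / ‖a‖ ^ 2)
    (haτneg : aτ < 0) (hle : τcp ≤ τu) :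
    0 < ⟪a, g⟫ ∧ -ρ τu ≥ (1 + ε₀) * ⟪a, g⟫ / (2 * ε₀ * ‖a‖ ^ 2) ∧ 0 < -ρ τu := by
  set s : ℝ := ‖a‖ ^ 2 with hs
  have hane : ‖a‖ ≠ 0 := norm_ne_zero_iff.mpr ha
  have hspos : 0 < s := by positivity
  set ag : ℝ := ⟪a, g⟫ with hag
  set aBa : ℝ := ⟪a, Matrix.toEuclideanLin B a⟫ with haBa
  have hBapos : 0 < aBa := by
    have h := hBpd.dotProduct_mulVec_pos (x := WithLp.ofLp a) (by simpa using ha)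
    rw [haBa]
    simp only [Matrix.toEuclideanLin_apply]
    simpa [PiLp.inner_apply, dotProduct, Matrix.mulVec, mul_comm,
      RCLike.inner_apply, Finset.mul_sum] using h
  have hagpos : 0 < ag := by nlinarith
  -- key inequality from τcp ≤ τu
  have hτcp' := hτcp haτneg.ne
  have hkey : (1 + ε₀) * aBa ≤ ε₀ * s * ag := by
    have h1 : ag / (-aτ) ≤ (1 + ε₀) / s := by
      have h0 : -ag / aτ = ag / (-aτ) := by rw [neg_div, div_neg]
      rw [← h0, ← hτcp', ← hτu]; exact hle
    have h2 : ag * s ≤ (1 + ε₀) * (-aτ) :=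
      (div_le_div_iff₀ (by linarith) hspos).mp h1
    nlinarith
  have hεne : ε₀ ≠ 0 := hε₀.ne'
  have hsne : s ≠ 0 := hspos.ne'
  have hτune : τu ≠ 1 / s := by
    rw [hτu]
    intro h
    rw [div_eq_div_iff hsne hsne] at h
    nlinarith
  have h1 : 1 - τu * s = -ε₀ := by rw [hτu]; field_simp; ring
  have hρu : ρ τu = -((1 + ε₀) * ag / (s * ε₀)) + (1 + ε₀) ^ 2 * aBa / (2 * ε₀ ^ 2 * s ^ 2) := by
    rw [hρ τu hτune, h1, hτu]
    field_simp
  have hdiff : -ρ τu - (1 + ε₀) * ag / (2 * ε₀ * s)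
      = (1 + ε₀) * (ε₀ * s * ag - (1 + ε₀) * aBa) / (2 * ε₀ ^ 2 * s ^ 2) := by
    rw [hρu]; field_simp; ring
  have hnum : 0 ≤ (1 + ε₀) * (ε₀ * s * ag - (1 + ε₀) * aBa) / (2 * ε₀ ^ 2 * s ^ 2) := by
    apply div_nonneg _ (by positivity)
    have : 0 ≤ ε₀ * s * ag - (1 + ε₀) * aBa := by linarith
    positivity
  have h2 : -ρ τu ≥ (1 + ε₀) * ag / (2 * ε₀ * s) := by linarith
  have h3 : 0 < (1 + ε₀) * ag / (2 * ε₀ * s) := by positivity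
  exact ⟨hagpos, h2, by linarith⟩
end

section
/- Let f : ℝⁿ → ℝ be twice continuously differentiable, let x, s, a ∈ ℝⁿ, let B be a symmetric positive definite real n×n matrix, let ε₀ ∈ (0,1) with |1 − aᵀs| ≥ ε₀, and let g = ∇f(x). Suppose M ≥ 0 satisfies ‖∇²f(x + t·s)‖ ≤ M (operator norm) for all t ∈ [0,1]. Then |f(x) − f(x + s) + (gᵀs)/(1 − aᵀs) + (sᵀBs)/(2(1 − aᵀs)²)| ≤ (M/2 + ‖g‖·‖a‖/ε₀ + ‖B‖/(2ε₀²))·‖s‖², where ‖B‖ is the operator norm of B. (This bounds the difference between the actual reduction f(x) − f(x+s) and the predicted reduction of the conic model −(gᵀs)/(1 − aᵀs) − (sᵀBs)/(2(1 − aᵀs)²).) -/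
open Set

lemma taylor2_bound {E : Type*} [NormedAddCommGroup E] [NormedSpace ℝ E]
    (f : E → ℝ) (hf : ContDiff ℝ 2 f) (x s : E) (M : ℝ)
    (hHess : ∀ t ∈ Set.Icc (0 : ℝ) 1, ‖fderiv ℝ (fderiv ℝ f) (x + t • s)‖ ≤ M) :
    |f (x + s) - f x - fderiv ℝ f x s| ≤ M / 2 * ‖s‖ ^ 2 := by
  set c : ℝ → E := fun t => x + t • s with hc
  have hcder : ∀ t : ℝ, HasDerivAt c s t := by
    intro t
    exact (((hasDerivAt_id t).smul_const s).const_add x).congr_deriv (one_smul ℝ s)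
  set φ : ℝ → ℝ := fun t => f (c t) with hφ
  set φ₁ : ℝ → ℝ := fun t => fderiv ℝ f (c t) s with hφ₁
  have hfd : Differentiable ℝ f := hf.differentiable (by norm_num)
  have hfd2 : Differentiable ℝ (fderiv ℝ f) :=
    (hf.fderiv_right (m := 1) (by norm_num)).differentiable one_ne_zero
  have hφder : ∀ t : ℝ, HasDerivAt φ (φ₁ t) t := fun t =>
    (hfd (c t)).hasFDerivAt.comp_hasDerivAt t (hcder t)
  have hφ₁der : ∀ t : ℝ, HasDerivAt φ₁ (fderiv ℝ (fderiv ℝ f) (c t) s s) t := by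
    intro t
    have h1 : HasDerivAt (fun t => fderiv ℝ f (c t)) (fderiv ℝ (fderiv ℝ f) (c t) s) t :=
      (hfd2 (c t)).hasFDerivAt.comp_hasDerivAt t (hcder t)
    have := (ContinuousLinearMap.apply ℝ ℝ s).hasFDerivAt.comp_hasDerivAt t h1
    exact this
  have hφc : ContDiff ℝ 2 φ := hf.comp (contDiff_const.add (contDiff_id.smul contDiff_const))
  have hderφ : deriv φ = φ₁ := funext fun t => (hφder t).deriv
  have hud : UniqueDiffOn ℝ (Icc (0:ℝ) 1) := uniqueDiffOn_Icc one_pos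
  have h1eq : ∀ y ∈ Icc (0:ℝ) 1, iteratedDerivWithin 1 φ (Icc 0 1) y = φ₁ y := by
    intro y hy
    rw [iteratedDerivWithin_one, (hφder y).hasDerivWithinAt.derivWithin (hud y hy)]
  obtain ⟨x', hx', hrem⟩ := taylor_mean_remainder_lagrange (n := 1) (f := φ) (x₀ := 0) (x := 1)
    zero_ne_one
    (by rw [uIcc_of_le zero_le_one]; exact hφc.contDiffOn.of_le one_le_two)
    (by rw [uIcc_of_le zero_le_one, uIoo_of_le zero_le_one]; exact
    (fun y hy => ((hφ₁der y).differentiableAt.differentiableWithinAt).congr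
      (fun z hz => h1eq z (Ioo_subset_Icc_self hz)) (h1eq y (Ioo_subset_Icc_self hy))))
  rw [uIoo_of_le zero_le_one] at hx'
  rw [uIcc_of_le zero_le_one] at hrem
  have hx'I : x' ∈ Icc (0:ℝ) 1 := Ioo_subset_Icc_self hx'
  have h2eq : iteratedDerivWithin 2 φ (Icc 0 1) x' = fderiv ℝ (fderiv ℝ f) (c x') s s := by
    rw [show (2:ℕ) = 1 + 1 from rfl, iteratedDerivWithin_succ]
    rw [derivWithin_congr h1eq (h1eq x' hx'I)]
    exact (hφ₁der x').hasDerivWithinAt.derivWithin (hud x' hx'I)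
  have htay : taylorWithinEval φ 1 (Icc 0 1) 0 1 = φ 0 + φ₁ 0 := by
    rw [taylor_within_apply]
    rw [Finset.sum_range_succ, Finset.sum_range_succ, Finset.sum_range_zero]
    simp [h1eq 0 (by norm_num : (0:ℝ) ∈ Icc (0:ℝ) 1)]
  have key : φ 1 - (φ 0 + φ₁ 0) = fderiv ℝ (fderiv ℝ f) (c x') s s * (1 - 0) ^ (1+1) / (1+1).factorial := by
    rw [← htay, hrem, h2eq]
  have hb : |fderiv ℝ (fderiv ℝ f) (c x') s s| ≤ M * ‖s‖ ^ 2 := by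
    calc |fderiv ℝ (fderiv ℝ f) (c x') s s| ≤ ‖fderiv ℝ (fderiv ℝ f) (c x') s‖ * ‖s‖ :=
          (fderiv ℝ (fderiv ℝ f) (c x') s).le_opNorm s
      _ ≤ (‖fderiv ℝ (fderiv ℝ f) (c x')‖ * ‖s‖) * ‖s‖ := by
          gcongr; exact (fderiv ℝ (fderiv ℝ f) (c x')).le_opNorm s
      _ ≤ (M * ‖s‖) * ‖s‖ := by
          gcongr
          · exact hHess x' hx'I
      _ = M * ‖s‖ ^ 2 := by ring
  have h01 : φ 1 = f (x + s) := by simp [hφ, hc]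
  have h00 : φ 0 = f x := by simp [hφ, hc]
  have h10 : φ₁ 0 = fderiv ℝ f x s := by simp [hφ₁, hc]
  have : f (x + s) - f x - fderiv ℝ f x s = fderiv ℝ (fderiv ℝ f) (c x') s s / 2 := by
    rw [← h01, ← h00, ← h10]
    rw [show φ 1 - φ 0 - φ₁ 0 = φ 1 - (φ 0 + φ₁ 0) by ring, key]
    norm_num
  rw [this, abs_div]
  rw [abs_of_nonneg (by norm_num : (0:ℝ) ≤ 2)]
  linarith

open scoped RealInnerProductSpace

theorem stmt_18 {n : ℕ} (hn : 1 ≤ n)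
    (f : EuclideanSpace ℝ (Fin n) → ℝ) (hf : ContDiff ℝ 2 f)
    (x s a : EuclideanSpace ℝ (Fin n))
    (B : Matrix (Fin n) (Fin n) ℝ) (hBs : B.IsSymm) (hBpd : B.PosDef)
    (ε₀ : ℝ) (hε₀ : 0 < ε₀) (hε₁ : ε₀ < 1)
    (hfeas : ε₀ ≤ |1 - ⟪a, s⟫|)
    (g : EuclideanSpace ℝ (Fin n)) (hg : g = gradient f x)
    (M : ℝ) (hM : 0 ≤ M)
    (hHess : ∀ t ∈ Set.Icc (0 : ℝ) 1, ‖fderiv ℝ (fderiv ℝ f) (x + t • s)‖ ≤ M) :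
    |f x - f (x + s) + ⟪g, s⟫ / (1 - ⟪a, s⟫)
        + ⟪s, Matrix.toEuclideanLin B s⟫ / (2 * (1 - ⟪a, s⟫) ^ 2)|
      ≤ (M / 2 + ‖g‖ * ‖a‖ / ε₀ + ‖Matrix.toEuclideanCLM (𝕜 := ℝ) B‖ / (2 * ε₀ ^ 2))
          * ‖s‖ ^ 2 := by
  have hT := taylor2_bound f hf x s M hHess
  have hgs : ⟪g, s⟫ = fderiv ℝ f x s := by
    rw [hg]
    exact InnerProductSpace.toDual_symm_apply
  rw [← hgs] at hT
  set d : ℝ := 1 - ⟪a, s⟫ with hd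
  have hdabs : ε₀ ≤ |d| := hfeas
  have hdn : d ≠ 0 := by
    intro h
    rw [h] at hdabs
    simp at hdabs
    linarith
  set q : ℝ := ⟪s, Matrix.toEuclideanLin B s⟫ with hq
  have ha' : ⟪a, s⟫ = 1 - d := by rw [hd]; ring
  have hsplit : f x - f (x + s) + ⟪g, s⟫ / d + q / (2 * d ^ 2)
      = -(f (x + s) - f x - ⟪g, s⟫) + ⟪g, s⟫ * ⟪a, s⟫ / d + q / (2 * d ^ 2) := by
    rw [ha']
    field_simp
    ring
  have hgsb : |⟪g, s⟫| ≤ ‖g‖ * ‖s‖ := abs_real_inner_le_norm g s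
  have hasb : |⟪a, s⟫| ≤ ‖a‖ * ‖s‖ := abs_real_inner_le_norm a s
  have t2 : |⟪g, s⟫ * ⟪a, s⟫ / d| ≤ ‖g‖ * ‖a‖ / ε₀ * ‖s‖ ^ 2 := by
    rw [abs_div, abs_mul]
    calc |⟪g, s⟫| * |⟪a, s⟫| / |d| ≤ (‖g‖ * ‖s‖) * (‖a‖ * ‖s‖) / ε₀ := by
          gcongr <;> positivity
      _ = ‖g‖ * ‖a‖ / ε₀ * ‖s‖ ^ 2 := by ring
  have hCLM : Matrix.toEuclideanLin B s = Matrix.toEuclideanCLM (𝕜 := ℝ) B s := rfl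
  have hqb : |q| ≤ ‖Matrix.toEuclideanCLM (𝕜 := ℝ) B‖ * ‖s‖ ^ 2 := by
    calc |q| ≤ ‖s‖ * ‖Matrix.toEuclideanLin B s‖ := abs_real_inner_le_norm _ _
      _ ≤ ‖s‖ * (‖Matrix.toEuclideanCLM (𝕜 := ℝ) B‖ * ‖s‖) := by
          rw [hCLM]; gcongr; exact (Matrix.toEuclideanCLM (𝕜 := ℝ) B).le_opNorm s
      _ = ‖Matrix.toEuclideanCLM (𝕜 := ℝ) B‖ * ‖s‖ ^ 2 := by ring
  have hd2 : ε₀ ^ 2 ≤ d ^ 2 := by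
    rw [← sq_abs d]
    gcongr
  have t3 : |q / (2 * d ^ 2)| ≤ ‖Matrix.toEuclideanCLM (𝕜 := ℝ) B‖ / (2 * ε₀ ^ 2) * ‖s‖ ^ 2 := by
    rw [abs_div, abs_of_nonneg (by positivity : (0:ℝ) ≤ 2 * d ^ 2)]
    calc |q| / (2 * d ^ 2) ≤ (‖Matrix.toEuclideanCLM (𝕜 := ℝ) B‖ * ‖s‖ ^ 2) / (2 * ε₀ ^ 2) := by
          gcongr
      _ = ‖Matrix.toEuclideanCLM (𝕜 := ℝ) B‖ / (2 * ε₀ ^ 2) * ‖s‖ ^ 2 := by ring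
  calc |f x - f (x + s) + ⟪g, s⟫ / d + q / (2 * d ^ 2)|
      = |-(f (x + s) - f x - ⟪g, s⟫) + ⟪g, s⟫ * ⟪a, s⟫ / d + q / (2 * d ^ 2)| := by
        rw [hsplit]
    _ ≤ |-(f (x + s) - f x - ⟪g, s⟫) + ⟪g, s⟫ * ⟪a, s⟫ / d| + |q / (2 * d ^ 2)| := abs_add_le _ _
    _ ≤ |-(f (x + s) - f x - ⟪g, s⟫)| + |⟪g, s⟫ * ⟪a, s⟫ / d| + |q / (2 * d ^ 2)| := by
        gcongr; exact abs_add_le _ _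
    _ ≤ M / 2 * ‖s‖ ^ 2 + ‖g‖ * ‖a‖ / ε₀ * ‖s‖ ^ 2
          + ‖Matrix.toEuclideanCLM (𝕜 := ℝ) B‖ / (2 * ε₀ ^ 2) * ‖s‖ ^ 2 := by
        rw [abs_neg]
        gcongr
    _ = (M / 2 + ‖g‖ * ‖a‖ / ε₀ + ‖Matrix.toEuclideanCLM (𝕜 := ℝ) B‖ / (2 * ε₀ ^ 2)) * ‖s‖ ^ 2 := by
        ring
end
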